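/- arXiv:2006.03781 — 8 statements merged into one kernel-verified Lean document; each statement's English description precedes it below -/
import Mathlib

section
/- Let T be a finite nonempty set of vectors in ℝ^d partitioned into disjoint subsets T_C (nonempty) and T_D, with labels y_x ∈ {-1, 1} for each x ∈ T. Let τ > 0, V ≥ 0, 0 ≤ ξ ≤ 1/2, and let q : T → [0,1] satisfy ∑_{x∈T} q(x) ≥ (1−ξ)|T|. Define p(x) = q(x) / ∑_{x'∈T} q(x'). Fix w ∈ ℝ^d and suppose (1/|T|) ∑_{x∈T} q(x)(w·x)² ≤ V, (1/|T_C|) ∑_{x∈T_C} (w·x)² ≤ V, and |T_D| ≤ ξ|T|. Then (1/|T_C|) ∑_{x∈T_C} ℓ_τ(w; x, y_x) ≤ ∑_{x∈T} p(x) ℓ_τ(w; x, y_x) + 2ξ(1 + √(2V)/τ) + 2ξ + √(2ξV)/τ. -/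
set_option maxHeartbeats 1000000

open Finset

/-- Auxiliary: abstract version with a loss function `ℓ` satisfying `0 ≤ ℓ x ≤ 1 + |u x|/τ`. -/
theorem aux_clean_loss {α : Type*} [DecidableEq α]
    (T TC TD : Finset α)
    (hTC : TC.Nonempty) (hdisj : Disjoint TC TD) (hunion : ∀ x, x ∈ T ↔ x ∈ TC ∨ x ∈ TD)
    (τ V ξ : ℝ) (hτ : 0 < τ) (hV : 0 ≤ V) (hξ0 : 0 ≤ ξ) (hξ : ξ ≤ 1 / 2)
    (q u l : α → ℝ)
    (hl0 : ∀ x, 0 ≤ l x) (hl1 : ∀ x ∈ T, l x ≤ 1 + |u x| / τ)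
    (hq01 : ∀ x ∈ T, 0 ≤ q x ∧ q x ≤ 1)
    (hqsum : (1 - ξ) * T.card ≤ ∑ x ∈ T, q x)
    (hvarq : (1 / T.card) * ∑ x ∈ T, q x * (u x) ^ 2 ≤ V)
    (hvarC : (1 / TC.card) * ∑ x ∈ TC, (u x) ^ 2 ≤ V)
    (hTD : (TD.card : ℝ) ≤ ξ * T.card) :
    (1 / TC.card) * ∑ x ∈ TC, l x
      ≤ (∑ x ∈ T, q x * l x) / (∑ x ∈ T, q x)
        + 2 * ξ * (1 + Real.sqrt (2 * V) / τ) + 2 * ξ + Real.sqrt (2 * ξ * V) / τ := by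
  have hTCsub : TC ⊆ T := fun x hx => (hunion x).2 (Or.inl hx)
  have hTeq : T = TC ∪ TD := by ext x; simpa using hunion x
  have hcard : (T.card : ℝ) = TC.card + TD.card := by
    rw [hTeq, Finset.card_union_of_disjoint hdisj]; push_cast; ring
  have hNCpos : (0:ℝ) < TC.card := by exact_mod_cast Finset.card_pos.mpr hTC
  have hNCN : (TC.card:ℝ) ≤ T.card := by exact_mod_cast Finset.card_le_card hTCsub
  have hNpos : (0:ℝ) < T.card := lt_of_lt_of_le hNCpos hNCN
  have hNCge : (1 - ξ) * T.card ≤ (TC.card:ℝ) := by nlinarith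
  have hN2NC : (T.card:ℝ) ≤ 2 * TC.card := by nlinarith
  set Q := ∑ x ∈ T, q x with hQdef
  have hQleN : Q ≤ (T.card:ℝ) := by
    calc Q ≤ ∑ _x ∈ T, (1:ℝ) := Finset.sum_le_sum fun x hx => (hq01 x hx).2
    _ = T.card := by simp
  have hQpos : 0 < Q := lt_of_lt_of_le (by nlinarith) hqsum
  have hN2Q : (T.card:ℝ) ≤ 2 * Q := by nlinarith
  -- variance bounds, unnormalized
  have hvarC' : ∑ x ∈ TC, (u x) ^ 2 ≤ TC.card * V := by
    have h := mul_le_mul_of_nonneg_left hvarC hNCpos.le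
    rw [← mul_assoc, mul_one_div_cancel hNCpos.ne', one_mul] at h
    linarith
  have hvarq' : ∑ x ∈ T, q x * (u x) ^ 2 ≤ T.card * V := by
    have h := mul_le_mul_of_nonneg_left hvarq hNpos.le
    rw [← mul_assoc, mul_one_div_cancel hNpos.ne', one_mul] at h
    linarith
  -- mass of 1 - q on TC
  have hq1 : ∀ x ∈ TC, 0 ≤ 1 - q x := fun x hx => by linarith [(hq01 x (hTCsub hx)).2]
  have hsplitQ : Q = ∑ x ∈ TC, q x + ∑ x ∈ TD, q x := by
    rw [hQdef, hTeq, Finset.sum_union hdisj]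
  have hTDq : ∑ x ∈ TD, q x ≤ (TD.card:ℝ) := by
    calc ∑ x ∈ TD, q x ≤ ∑ _x ∈ TD, (1:ℝ) :=
          Finset.sum_le_sum fun x hx => (hq01 x (hunion x |>.2 (Or.inr hx))).2
    _ = TD.card := by simp
  have hsum1q : ∑ x ∈ TC, (1 - q x) ≤ ξ * T.card := by
    have h1 : ∑ x ∈ TC, (1 - q x) = (TC.card:ℝ) - ∑ x ∈ TC, q x := by
      rw [Finset.sum_sub_distrib]; simp
    linarith
  have hsum1q0 : 0 ≤ ∑ x ∈ TC, (1 - q x) := Finset.sum_nonneg hq1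
  -- Cauchy-Schwarz on TC
  have hCS1 : (∑ x ∈ TC, (1 - q x) * |u x|) ^ 2
      ≤ (∑ x ∈ TC, (1 - q x)) * ∑ x ∈ TC, (1 - q x) * (u x) ^ 2 :=
    Finset.sum_sq_le_sum_mul_sum_of_sq_eq_mul TC hq1
      (fun x _ => mul_nonneg (hq1 x ‹_›) (sq_nonneg _))
      (fun x _ => by rw [mul_pow, sq_abs]; ring)
  have hg1 : ∑ x ∈ TC, (1 - q x) * (u x) ^ 2 ≤ TC.card * V := by
    refine le_trans (Finset.sum_le_sum fun x hx => ?_) hvarC'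
    nlinarith [(hq01 x (hTCsub hx)).1, sq_nonneg (u x)]
  have hB : ∑ x ∈ TC, (1 - q x) * |u x| ≤ TC.card * Real.sqrt (2 * ξ * V) := by
    have hnn : 0 ≤ ∑ x ∈ TC, (1 - q x) * |u x| :=
      Finset.sum_nonneg fun x hx => mul_nonneg (hq1 x hx) (abs_nonneg _)
    have hsq : (∑ x ∈ TC, (1 - q x) * |u x|) ^ 2 ≤ (TC.card * Real.sqrt (2 * ξ * V)) ^ 2 := by
      have he : (TC.card * Real.sqrt (2 * ξ * V)) ^ 2 = 2 * ξ * V * (TC.card:ℝ) ^ 2 := by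
        rw [mul_pow, Real.sq_sqrt (by positivity)]; ring
      rw [he]
      have h2 : (∑ x ∈ TC, (1 - q x)) * (∑ x ∈ TC, (1 - q x) * (u x) ^ 2)
          ≤ (ξ * T.card) * (TC.card * V) := by
        have hgnn : 0 ≤ ∑ x ∈ TC, (1 - q x) * (u x) ^ 2 :=
          Finset.sum_nonneg fun x hx => mul_nonneg (hq1 x hx) (sq_nonneg _)
        apply mul_le_mul hsum1q hg1 hgnn (by positivity)
      nlinarith [hCS1, h2, hξ0, hV, hNCpos]
    nlinarith [hsq, hnn, mul_nonneg hNCpos.le (Real.sqrt_nonneg (2 * ξ * V))]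
  -- Cauchy-Schwarz on T
  have hqnn : ∀ x ∈ T, 0 ≤ q x := fun x hx => (hq01 x hx).1
  have hCS2 : (∑ x ∈ T, q x * |u x|) ^ 2
      ≤ (∑ x ∈ T, q x) * ∑ x ∈ T, q x * (u x) ^ 2 :=
    Finset.sum_sq_le_sum_mul_sum_of_sq_eq_mul T hqnn
      (fun x hx => mul_nonneg (hqnn x hx) (sq_nonneg _))
      (fun x _ => by rw [mul_pow, sq_abs]; ring)
  have hD : ∑ x ∈ T, q x * |u x| ≤ Q * Real.sqrt (2 * V) := by
    have hnn : 0 ≤ ∑ x ∈ T, q x * |u x| :=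
      Finset.sum_nonneg fun x hx => mul_nonneg (hqnn x hx) (abs_nonneg _)
    have hsq : (∑ x ∈ T, q x * |u x|) ^ 2 ≤ (Q * Real.sqrt (2 * V)) ^ 2 := by
      have he : (Q * Real.sqrt (2 * V)) ^ 2 = 2 * V * Q ^ 2 := by
        rw [mul_pow, Real.sq_sqrt (by positivity)]; ring
      rw [he]
      have h2 : Q * (∑ x ∈ T, q x * (u x) ^ 2) ≤ Q * ((T.card:ℝ) * V) :=
        mul_le_mul_of_nonneg_left hvarq' hQpos.le
      nlinarith [hCS2, h2, hQpos, hV]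
    nlinarith [hsq, hnn, mul_nonneg hQpos.le (Real.sqrt_nonneg (2 * V))]
  -- bound on S := ∑_T q l
  have hS : ∑ x ∈ T, q x * l x ≤ Q * (1 + Real.sqrt (2 * V) / τ) := by
    have h1 : ∑ x ∈ T, q x * l x ≤ ∑ x ∈ T, (q x + q x * |u x| / τ) := by
      refine Finset.sum_le_sum fun x hx => ?_
      have := hl1 x hx
      have h2 := mul_le_mul_of_nonneg_left this (hqnn x hx)
      calc q x * l x ≤ q x * (1 + |u x| / τ) := h2
      _ = q x + q x * |u x| / τ := by ring
    rw [Finset.sum_add_distrib] at h1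
    have h3 : ∑ x ∈ T, q x * |u x| / τ = (∑ x ∈ T, q x * |u x|) / τ := by
      rw [Finset.sum_div]
    rw [h3] at h1
    have h4 : (∑ x ∈ T, q x * |u x|) / τ ≤ Q * Real.sqrt (2 * V) / τ :=
      (div_le_div_iff_of_pos_right hτ).mpr hD
    calc ∑ x ∈ T, q x * l x ≤ Q + (∑ x ∈ T, q x * |u x|) / τ := h1
    _ ≤ Q + Q * Real.sqrt (2 * V) / τ := by linarith
    _ = Q * (1 + Real.sqrt (2 * V) / τ) := by ring
  have hS0 : 0 ≤ ∑ x ∈ T, q x * l x :=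
    Finset.sum_nonneg fun x hx => mul_nonneg (hqnn x hx) (hl0 x)
  -- bound on R := ∑_TC (1-q) l
  have hR : ∑ x ∈ TC, (1 - q x) * l x
      ≤ TC.card * (2 * ξ + Real.sqrt (2 * ξ * V) / τ) := by
    have h1 : ∑ x ∈ TC, (1 - q x) * l x
        ≤ ∑ x ∈ TC, ((1 - q x) + (1 - q x) * |u x| / τ) := by
      refine Finset.sum_le_sum fun x hx => ?_
      have h2 := mul_le_mul_of_nonneg_left (hl1 x (hTCsub hx)) (hq1 x hx)
      calc (1 - q x) * l x ≤ (1 - q x) * (1 + |u x| / τ) := h2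
      _ = (1 - q x) + (1 - q x) * |u x| / τ := by ring
    rw [Finset.sum_add_distrib] at h1
    have h3 : ∑ x ∈ TC, (1 - q x) * |u x| / τ = (∑ x ∈ TC, (1 - q x) * |u x|) / τ := by
      rw [Finset.sum_div]
    rw [h3] at h1
    have h4 : (∑ x ∈ TC, (1 - q x) * |u x|) / τ ≤ TC.card * Real.sqrt (2 * ξ * V) / τ :=
      (div_le_div_iff_of_pos_right hτ).mpr hB
    have h5 : ∑ x ∈ TC, (1 - q x) ≤ 2 * ξ * TC.card := by nlinarith
    calc ∑ x ∈ TC, (1 - q x) * l x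
        ≤ (∑ x ∈ TC, (1 - q x)) + (∑ x ∈ TC, (1 - q x) * |u x|) / τ := h1
    _ ≤ 2 * ξ * TC.card + TC.card * Real.sqrt (2 * ξ * V) / τ := by linarith
    _ = TC.card * (2 * ξ + Real.sqrt (2 * ξ * V) / τ) := by ring
  -- split the clean sum
  have hsplitC : ∑ x ∈ TC, l x
      = ∑ x ∈ TC, q x * l x + ∑ x ∈ TC, (1 - q x) * l x := by
    rw [← Finset.sum_add_distrib]
    exact Finset.sum_congr rfl fun x _ => by ring
  have hSC : ∑ x ∈ TC, q x * l x ≤ ∑ x ∈ T, q x * l x :=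
    Finset.sum_le_sum_of_subset_of_nonneg hTCsub fun x hx _ =>
      mul_nonneg (hqnn x hx) (hl0 x)
  -- S/NC ≤ S/Q + 2ξ(1+√(2V)/τ)
  have hQleNC : Q ≤ (1 + 2 * ξ) * TC.card := by nlinarith
  have h7 : (∑ x ∈ T, q x * l x) / TC.card
      ≤ ((1 + 2 * ξ) * (∑ x ∈ T, q x * l x)) / Q := by
    rw [div_le_div_iff₀ hNCpos hQpos]
    nlinarith
  have hSQ : (∑ x ∈ T, q x * l x) / Q ≤ 1 + Real.sqrt (2 * V) / τ := by
    rw [div_le_iff₀ hQpos]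
    calc ∑ x ∈ T, q x * l x ≤ Q * (1 + Real.sqrt (2 * V) / τ) := hS
    _ = (1 + Real.sqrt (2 * V) / τ) * Q := by ring
  have h8 : ((1 + 2 * ξ) * (∑ x ∈ T, q x * l x)) / Q
      = (∑ x ∈ T, q x * l x) / Q + 2 * ξ * ((∑ x ∈ T, q x * l x) / Q) := by
    ring
  have h9 : 2 * ξ * ((∑ x ∈ T, q x * l x) / Q) ≤ 2 * ξ * (1 + Real.sqrt (2 * V) / τ) :=
    mul_le_mul_of_nonneg_left hSQ (by positivity)
  -- assemble
  have hA : (1 / TC.card : ℝ) * ∑ x ∈ TC, l x = (∑ x ∈ TC, l x) / TC.card := by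
    rw [one_div, inv_mul_eq_div]
  rw [hA, hsplitC, add_div]
  have h10 : (∑ x ∈ TC, q x * l x) / TC.card ≤ (∑ x ∈ T, q x * l x) / TC.card :=
    (div_le_div_iff_of_pos_right hNCpos).mpr hSC
  have h11 : (∑ x ∈ TC, (1 - q x) * l x) / TC.card
      ≤ 2 * ξ + Real.sqrt (2 * ξ * V) / τ := by
    rw [div_le_iff₀ hNCpos]
    calc ∑ x ∈ TC, (1 - q x) * l x ≤ TC.card * (2 * ξ + Real.sqrt (2 * ξ * V) / τ) := hR
    _ = (2 * ξ + Real.sqrt (2 * ξ * V) / τ) * TC.card := by ring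
  linarith [h7, h8 ▸ h7, h9, h10, h11]

/-- Loss on clean instances is bounded by the reweighted loss plus error terms. -/
theorem clean_loss_le_reweighted_loss {d : ℕ}
    (T TC TD : Finset (EuclideanSpace ℝ (Fin d)))
    (hTC : TC.Nonempty) (hdisj : Disjoint TC TD) (hunion : ∀ x, x ∈ T ↔ x ∈ TC ∨ x ∈ TD)
    (y : EuclideanSpace ℝ (Fin d) → ℝ) (hy : ∀ x ∈ T, y x = 1 ∨ y x = -1)
    (τ V ξ : ℝ) (hτ : 0 < τ) (hV : 0 ≤ V) (hξ0 : 0 ≤ ξ) (hξ : ξ ≤ 1 / 2)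
    (q : EuclideanSpace ℝ (Fin d) → ℝ)
    (hq01 : ∀ x ∈ T, 0 ≤ q x ∧ q x ≤ 1)
    (hqsum : (1 - ξ) * T.card ≤ ∑ x ∈ T, q x)
    (p : EuclideanSpace ℝ (Fin d) → ℝ)
    (hp : ∀ x, p x = q x / ∑ x' ∈ T, q x')
    (w : EuclideanSpace ℝ (Fin d))
    (hvarq : (1 / T.card) * ∑ x ∈ T, q x * (inner ℝ w x : ℝ) ^ 2 ≤ V)
    (hvarC : (1 / TC.card) * ∑ x ∈ TC, (inner ℝ w x : ℝ) ^ 2 ≤ V)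
    (hTD : (TD.card : ℝ) ≤ ξ * T.card) :
    (1 / TC.card) * ∑ x ∈ TC, max 0 (1 - y x * (inner ℝ w x : ℝ) / τ)
      ≤ (∑ x ∈ T, p x * max 0 (1 - y x * (inner ℝ w x : ℝ) / τ))
        + 2 * ξ * (1 + Real.sqrt (2 * V) / τ) + 2 * ξ + Real.sqrt (2 * ξ * V) / τ := by
  classical
  set l : EuclideanSpace ℝ (Fin d) → ℝ :=
    fun x => max 0 (1 - y x * (inner ℝ w x : ℝ) / τ) with hl
  have hl0 : ∀ x, 0 ≤ l x := fun x => le_max_left _ _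
  have hl1 : ∀ x ∈ T, l x ≤ 1 + |(inner ℝ w x : ℝ)| / τ := by
    intro x hx
    have hpos : (0:ℝ) ≤ 1 + |(inner ℝ w x : ℝ)| / τ := by positivity
    refine max_le hpos ?_
    have habs : -|(inner ℝ w x : ℝ)| ≤ y x * (inner ℝ w x : ℝ) := by
      rcases hy x hx with h | h <;> rw [h] <;>
        nlinarith [neg_abs_le ((inner ℝ w x : ℝ)), le_abs_self ((inner ℝ w x : ℝ))]
    have h2 : -(|(inner ℝ w x : ℝ)| / τ) ≤ y x * (inner ℝ w x : ℝ) / τ := by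
      rw [← neg_div]
      gcongr
    linarith
  have hkey := aux_clean_loss T TC TD hTC hdisj hunion τ V ξ hτ hV hξ0 hξ q
    (fun x => (inner ℝ w x : ℝ)) l hl0 hl1 hq01 hqsum hvarq hvarC hTD
  have hP : ∑ x ∈ T, p x * l x = (∑ x ∈ T, q x * l x) / (∑ x ∈ T, q x) := by
    rw [Finset.sum_div]
    exact Finset.sum_congr rfl fun x _ => by rw [hp x, div_mul_eq_mul_div]
  rw [hP]
  exact hkey
end

section
/- Let T be a finite nonempty set of vectors in ℝ^d partitioned into disjoint subsets T_C (nonempty) and T_D, with labels y_x ∈ {-1, 1} for each x ∈ T. Let τ > 0, V ≥ 0, 0 ≤ ξ ≤ 1/2, and let q : T → [0,1] satisfy ∑_{x∈T} q(x) ≥ (1−ξ)|T|. Define p(x) = q(x) / ∑_{x'∈T} q(x'). Fix w ∈ ℝ^d and suppose (1/|T|) ∑_{x∈T} q(x)(w·x)² ≤ V and |T_D| ≤ ξ|T|. Then ∑_{x∈T} p(x) ℓ_τ(w; x, y_x) ≤ (1 + 2ξ) · (1/|T_C|) ∑_{x∈T_C} ℓ_τ(w; x, y_x) + 2ξ + 2√(ξV)/τ.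 -/
set_option maxHeartbeats 1000000

open Finset

theorem reweighted_aux {α : Type*} [DecidableEq α] (T TC TD : Finset α)
    (hTC : TC.Nonempty) (hdisj : Disjoint TC TD) (hT : T = TC ∪ TD)
    (ℓ a : α → ℝ) (hℓ0 : ∀ x, 0 ≤ ℓ x)
    (τ V ξ : ℝ) (hτ : 0 < τ) (hV : 0 ≤ V) (hξ0 : 0 ≤ ξ) (hξ : ξ ≤ 1 / 2)
    (hℓb : ∀ x ∈ TD, ℓ x ≤ 1 + |a x| / τ)
    (q : α → ℝ) (hq01 : ∀ x ∈ T, 0 ≤ q x ∧ q x ≤ 1)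
    (hqsum : (1 - ξ) * T.card ≤ ∑ x ∈ T, q x)
    (hvarq : (1 / T.card) * ∑ x ∈ T, q x * a x ^ 2 ≤ V)
    (hTD : (TD.card : ℝ) ≤ ξ * T.card) :
    (∑ x ∈ T, (q x / ∑ x' ∈ T, q x') * ℓ x)
      ≤ (1 + 2 * ξ) * ((1 / TC.card) * ∑ x ∈ TC, ℓ x) + 2 * ξ + 2 * Real.sqrt (ξ * V) / τ := by
  have hTCsub : TC ⊆ T := hT ▸ Finset.subset_union_left
  have hTDsub : TD ⊆ T := hT ▸ Finset.subset_union_right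
  set n : ℝ := (T.card : ℝ) with hn
  set m : ℝ := (TC.card : ℝ) with hm
  have hm0 : (0:ℝ) < m := by rw [hm]; exact_mod_cast hTC.card_pos
  have hmn : m ≤ n := by rw [hm, hn]; exact_mod_cast Finset.card_le_card hTCsub
  have hn0 : (0:ℝ) < n := lt_of_lt_of_le hm0 hmn
  set S := ∑ x ∈ T, q x with hSdef
  have hS1 : (1 - ξ) * n ≤ S := hqsum
  have hhalf : n / 2 ≤ S := by nlinarith
  have hS0 : (0:ℝ) < S := by linarith
  set C := ∑ x ∈ TC, ℓ x with hCdef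
  have hC0 : 0 ≤ C := Finset.sum_nonneg fun x _ => hℓ0 x
  set s := Real.sqrt (ξ * V) with hsdef
  have hs0 : 0 ≤ s := Real.sqrt_nonneg _
  have hsplit : ∑ x ∈ T, q x * ℓ x = (∑ x ∈ TC, q x * ℓ x) + ∑ x ∈ TD, q x * ℓ x := by
    rw [hT, Finset.sum_union hdisj]
  have h1 : ∑ x ∈ TC, q x * ℓ x ≤ C := Finset.sum_le_sum fun x hx => by
    have hq := hq01 x (hTCsub hx)
    nlinarith [hℓ0 x]
  have h2 : ∑ x ∈ TD, q x * ℓ x ≤ (∑ x ∈ TD, q x) + (∑ x ∈ TD, q x * |a x|) / τ := by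
    rw [Finset.sum_div, ← Finset.sum_add_distrib]
    refine Finset.sum_le_sum fun x hx => ?_
    have hq := hq01 x (hTDsub hx)
    have hb := hℓb x hx
    have hmul : q x * ℓ x ≤ q x * (1 + |a x| / τ) := mul_le_mul_of_nonneg_left hb hq.1
    have heq : q x * (1 + |a x| / τ) = q x + q x * |a x| / τ := by ring
    linarith
  have hqTD : ∑ x ∈ TD, q x ≤ ξ * n := by
    have hle : ∑ x ∈ TD, q x ≤ (TD.card : ℝ) := by
      calc ∑ x ∈ TD, q x ≤ ∑ _x ∈ TD, (1:ℝ) :=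
            Finset.sum_le_sum fun x hx => (hq01 x (hTDsub hx)).2
        _ = TD.card := by simp
    linarith
  have hvar' : ∑ x ∈ T, q x * a x ^ 2 ≤ V * n := by
    have h := mul_le_mul_of_nonneg_left hvarq hn0.le
    rw [← mul_assoc, mul_one_div_cancel hn0.ne', one_mul] at h
    linarith
  have hvTD : ∑ x ∈ TD, q x * a x ^ 2 ≤ V * n :=
    le_trans (Finset.sum_le_sum_of_subset_of_nonneg hTDsub fun x hx _ =>
      mul_nonneg (hq01 x hx).1 (sq_nonneg _)) hvar'
  set B := ∑ x ∈ TD, q x * |a x| with hBdef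
  have hB0 : 0 ≤ B := Finset.sum_nonneg fun x hx =>
    mul_nonneg (hq01 x (hTDsub hx)).1 (abs_nonneg _)
  have hCS : B ^ 2 ≤ (∑ x ∈ TD, q x) * ∑ x ∈ TD, q x * a x ^ 2 := by
    have key := Finset.sum_mul_sq_le_sq_mul_sq TD (fun x => Real.sqrt (q x))
      (fun x => Real.sqrt (q x) * |a x|)
    have e1 : ∑ x ∈ TD, Real.sqrt (q x) * (Real.sqrt (q x) * |a x|) = B :=
      Finset.sum_congr rfl fun x hx => by
        rw [← mul_assoc, Real.mul_self_sqrt (hq01 x (hTDsub hx)).1]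
    have e2 : ∑ x ∈ TD, Real.sqrt (q x) ^ 2 = ∑ x ∈ TD, q x :=
      Finset.sum_congr rfl fun x hx => Real.sq_sqrt (hq01 x (hTDsub hx)).1
    have e3 : ∑ x ∈ TD, (Real.sqrt (q x) * |a x|) ^ 2 = ∑ x ∈ TD, q x * a x ^ 2 :=
      Finset.sum_congr rfl fun x hx => by
        rw [mul_pow, Real.sq_sqrt (hq01 x (hTDsub hx)).1, sq_abs]
    rw [e1, e2, e3] at key
    exact key
  have hB2 : B ^ 2 ≤ ξ * V * n ^ 2 := by
    have hsum0 : 0 ≤ ∑ x ∈ TD, q x * a x ^ 2 := Finset.sum_nonneg fun x hx =>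
      mul_nonneg (hq01 x (hTDsub hx)).1 (sq_nonneg _)
    have hq0 : 0 ≤ ∑ x ∈ TD, q x := Finset.sum_nonneg fun x hx => (hq01 x (hTDsub hx)).1
    have hml : (∑ x ∈ TD, q x) * (∑ x ∈ TD, q x * a x ^ 2) ≤ (ξ * n) * (V * n) :=
      mul_le_mul hqTD hvTD hsum0 (by positivity)
    nlinarith
  have hBs : B ≤ s * n := by
    calc B = Real.sqrt (B ^ 2) := (Real.sqrt_sq hB0).symm
      _ ≤ Real.sqrt (ξ * V * n ^ 2) := Real.sqrt_le_sqrt hB2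
      _ = s * n := by rw [Real.sqrt_mul (mul_nonneg hξ0 hV), Real.sqrt_sq hn0.le]
  have hA : ∑ x ∈ T, q x * ℓ x ≤ C + ξ * n + s * n / τ := by
    have hBτ : B / τ ≤ s * n / τ := by gcongr
    rw [hsplit]; linarith
  have hLHS : ∑ x ∈ T, (q x / S) * ℓ x = (∑ x ∈ T, q x * ℓ x) / S := by
    rw [Finset.sum_div]; exact Finset.sum_congr rfl fun x _ => by ring
  rw [hLHS, div_le_iff₀ hS0]
  have hSm : (1 - ξ) * m ≤ S := le_trans (by nlinarith) hS1
  have k1 : C ≤ (1 + 2 * ξ) * (1 / m * C) * S := by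
    have hform : (1 + 2 * ξ) * (1 / m * C) * S = ((1 + 2 * ξ) * C * S) / m := by ring
    rw [hform, le_div_iff₀ hm0]
    nlinarith [mul_nonneg hC0 (sub_nonneg.mpr hSm),
      mul_nonneg (mul_nonneg hC0 hξ0) (sub_nonneg.mpr hSm),
      mul_nonneg (mul_nonneg (mul_nonneg hC0 hξ0) hm0.le) (by linarith : (0:ℝ) ≤ 1 - 2 * ξ)]
  have k2 : ξ * n ≤ 2 * ξ * S := by
    nlinarith [mul_nonneg hξ0 (by linarith : (0:ℝ) ≤ S - n / 2)]
  have k3 : s * n / τ ≤ 2 * s / τ * S := by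
    have h1' : s * n ≤ 2 * s * S := by
      nlinarith [mul_nonneg hs0 (by linarith : (0:ℝ) ≤ S - n / 2)]
    have h2' : 2 * s / τ * S = (2 * s * S) / τ := by ring
    rw [h2']
    gcongr
  linarith [hA, k1, k2, k3]

/-- The reweighted loss is bounded by the loss on clean instances plus error terms. -/
theorem reweighted_loss_le_clean_loss {d : ℕ}
    (T TC TD : Finset (EuclideanSpace ℝ (Fin d)))
    (hTC : TC.Nonempty) (hdisj : Disjoint TC TD) (hunion : ∀ x, x ∈ T ↔ x ∈ TC ∨ x ∈ TD)
    (y : EuclideanSpace ℝ (Fin d) → ℝ) (hy : ∀ x ∈ T, y x = 1 ∨ y x = -1)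
    (τ V ξ : ℝ) (hτ : 0 < τ) (hV : 0 ≤ V) (hξ0 : 0 ≤ ξ) (hξ : ξ ≤ 1 / 2)
    (q : EuclideanSpace ℝ (Fin d) → ℝ)
    (hq01 : ∀ x ∈ T, 0 ≤ q x ∧ q x ≤ 1)
    (hqsum : (1 - ξ) * T.card ≤ ∑ x ∈ T, q x)
    (p : EuclideanSpace ℝ (Fin d) → ℝ)
    (hp : ∀ x, p x = q x / ∑ x' ∈ T, q x')
    (w : EuclideanSpace ℝ (Fin d))
    (hvarq : (1 / T.card) * ∑ x ∈ T, q x * (inner ℝ w x : ℝ) ^ 2 ≤ V)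
    (hTD : (TD.card : ℝ) ≤ ξ * T.card) :
    (∑ x ∈ T, p x * max 0 (1 - y x * (inner ℝ w x : ℝ) / τ))
      ≤ (1 + 2 * ξ) * ((1 / TC.card) * ∑ x ∈ TC, max 0 (1 - y x * (inner ℝ w x : ℝ) / τ))
        + 2 * ξ + 2 * Real.sqrt (ξ * V) / τ := by
  classical
  have hT : T = TC ∪ TD := Finset.ext fun x => by simpa using hunion x
  have hℓb : ∀ x ∈ TD, max 0 (1 - y x * (inner ℝ w x : ℝ) / τ) ≤ 1 + |(inner ℝ w x : ℝ)| / τ := by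
    intro x hx
    have hxT : x ∈ T := (hunion x).mpr (Or.inr hx)
    have habs : (0:ℝ) ≤ |(inner ℝ w x : ℝ)| / τ := div_nonneg (abs_nonneg _) hτ.le
    refine max_le (by linarith) ?_
    have h1 : -(y x * (inner ℝ w x : ℝ)) ≤ |(inner ℝ w x : ℝ)| := by
      rcases hy x hxT with h | h <;> rw [h]
      · simpa using neg_le_abs (inner ℝ w x : ℝ)
      · simpa using le_abs_self (inner ℝ w x : ℝ)
    have h2 : -(y x * (inner ℝ w x : ℝ)) / τ ≤ |(inner ℝ w x : ℝ)| / τ := by gcongr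
    have h3 : -(y x * (inner ℝ w x : ℝ)) / τ = -(y x * (inner ℝ w x : ℝ) / τ) := by ring
    linarith
  have key := reweighted_aux T TC TD hTC hdisj hT
    (fun x => max 0 (1 - y x * (inner ℝ w x : ℝ) / τ)) (fun x => (inner ℝ w x : ℝ))
    (fun x => le_max_left _ _) τ V ξ hτ hV hξ0 hξ hℓb q hq01 hqsum hvarq hTD
  simp only [hp]
  simpa using key
end

section
/- Let μ be a probability measure on ℝ^d with ∫ ‖x‖₂² dμ(x) < ∞, let u ∈ ℝ^d, and let b, r > 0 and C ≥ 0. Suppose (i) |u·x| ≤ b for μ-almost every x, and (ii) for every unit vector v ∈ ℝ^d, ∫ ((r v + u)·x)² dμ(x) ≤ C(b² + r²). Then for every symmetric positive semidefinite d×d real matrix H with trace(H) ≤ r², it holds that ∫ xᵀ H x dμ(x) ≤ 2(C + 1)(b² + r²). -/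
open MeasureTheory

section Aux

variable {d : ℕ} (μ : Measure (EuclideanSpace ℝ (Fin d))) [IsProbabilityMeasure μ]

lemma aux_integrable (hint : Integrable (fun x => ‖x‖ ^ 2) μ)
    (a : EuclideanSpace ℝ (Fin d)) :
    Integrable (fun x => (inner ℝ a x : ℝ) ^ 2) μ := by
  refine Integrable.mono' (hint.const_mul (‖a‖ ^ 2)) ?_ ?_
  · exact ((continuous_const.inner continuous_id).pow 2).aestronglyMeasurable
  · refine Filter.Eventually.of_forall fun x => ?_
    rw [Real.norm_eq_abs, abs_of_nonneg (sq_nonneg _)]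
    calc (inner ℝ a x : ℝ) ^ 2 ≤ (‖a‖ * ‖x‖) ^ 2 := by
          have := abs_real_inner_le_norm a x
          nlinarith [abs_nonneg (inner ℝ a x : ℝ), neg_abs_le (inner ℝ a x : ℝ),
            le_abs_self (inner ℝ a x : ℝ)]
      _ = ‖a‖ ^ 2 * ‖x‖ ^ 2 := by ring

open scoped MatrixOrder in
lemma aux_sqrt {d : ℕ} (H : Matrix (Fin d) (Fin d) ℝ) (hpsd : H.PosSemidef) :
    ∃ B : Matrix (Fin d) (Fin d) ℝ, B.PosSemidef ∧ B * B = H := by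
  refine ⟨CFC.sqrt H, Matrix.nonneg_iff_posSemidef.mp (CFC.sqrt_nonneg H), ?_⟩
  rw [← sq]
  exact CFC.sq_sqrt H hpsd.nonneg

end Aux

/-- If the band condition holds a.e. and the second moment along all directions
`r•v + u` is bounded, then the expected quadratic form of any PSD matrix of trace at most `r²`
is bounded by `2(C+1)(b² + r²)`. -/
theorem expected_quadratic_form_le {d : ℕ}
    (μ : Measure (EuclideanSpace ℝ (Fin d))) [IsProbabilityMeasure μ]
    (hint : Integrable (fun x => ‖x‖ ^ 2) μ)
    (u : EuclideanSpace ℝ (Fin d)) (b r C : ℝ) (hb : 0 < b) (hr : 0 < r) (hC : 0 ≤ C)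
    (hband : ∀ᵐ x ∂μ, |(inner ℝ u x : ℝ)| ≤ b)
    (hvar : ∀ v : EuclideanSpace ℝ (Fin d), ‖v‖ = 1 →
      ∫ x, (inner ℝ (r • v + u) x : ℝ) ^ 2 ∂μ ≤ C * (b ^ 2 + r ^ 2))
    (H : Matrix (Fin d) (Fin d) ℝ) (hsymm : H.IsSymm) (hpsd : H.PosSemidef)
    (htr : H.trace ≤ r ^ 2) :
    ∫ x, ∑ i, ∑ j, H i j * x i * x j ∂μ ≤ 2 * (C + 1) * (b ^ 2 + r ^ 2) := by
  set K : ℝ := 2 * C * (b ^ 2 + r ^ 2) + 2 * b ^ 2 with hK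
  -- bound for ∫ ⟪u,x⟫²
  have hu2 : ∫ x, (inner ℝ u x : ℝ) ^ 2 ∂μ ≤ b ^ 2 := by
    have hle : ∀ᵐ x ∂μ, (inner ℝ u x : ℝ) ^ 2 ≤ b ^ 2 := by
      filter_upwards [hband] with x hx
      calc (inner ℝ u x : ℝ) ^ 2 = |(inner ℝ u x : ℝ)| ^ 2 := (sq_abs _).symm
        _ ≤ b ^ 2 := by nlinarith [abs_nonneg (inner ℝ u x : ℝ)]
    calc ∫ x, (inner ℝ u x : ℝ) ^ 2 ∂μ ≤ ∫ _, b ^ 2 ∂μ :=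
          integral_mono_ae (aux_integrable μ hint u) (integrable_const _) hle
      _ = b ^ 2 := by simp
  -- bound for unit vectors
  have hunit : ∀ v : EuclideanSpace ℝ (Fin d), ‖v‖ = 1 →
      ∫ x, (inner ℝ v x : ℝ) ^ 2 ∂μ ≤ K / r ^ 2 := by
    intro v hv
    have hpt : ∀ x, (inner ℝ (r • v) x : ℝ) ^ 2 ≤
        2 * (inner ℝ (r • v + u) x : ℝ) ^ 2 + 2 * (inner ℝ u x : ℝ) ^ 2 := by
      intro x
      have : (inner ℝ (r • v) x : ℝ) = (inner ℝ (r • v + u) x : ℝ) - (inner ℝ u x : ℝ) := by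
        rw [inner_add_left]; ring
      rw [this]
      nlinarith [sq_nonneg ((inner ℝ (r • v + u) x : ℝ) + (inner ℝ u x : ℝ))]
    have hInt : ∫ x, (inner ℝ (r • v) x : ℝ) ^ 2 ∂μ ≤ K := by
      calc ∫ x, (inner ℝ (r • v) x : ℝ) ^ 2 ∂μ
          ≤ ∫ x, (2 * (inner ℝ (r • v + u) x : ℝ) ^ 2 + 2 * (inner ℝ u x : ℝ) ^ 2) ∂μ := by
            refine integral_mono (aux_integrable μ hint _)
              (((aux_integrable μ hint _).const_mul 2).add
                ((aux_integrable μ hint u).const_mul 2)) hpt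
        _ = 2 * ∫ x, (inner ℝ (r • v + u) x : ℝ) ^ 2 ∂μ + 2 * ∫ x, (inner ℝ u x : ℝ) ^ 2 ∂μ := by
            rw [integral_add (((aux_integrable μ hint _).const_mul 2))
              ((aux_integrable μ hint u).const_mul 2), integral_const_mul, integral_const_mul]
        _ ≤ 2 * (C * (b ^ 2 + r ^ 2)) + 2 * b ^ 2 := by
            have h1 := hvar v hv
            linarith
        _ = K := by ring
    have hrw : ∀ x, (inner ℝ (r • v) x : ℝ) ^ 2 = r ^ 2 * (inner ℝ v x : ℝ) ^ 2 := by
      intro x; rw [real_inner_smul_left]; ring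
    rw [le_div_iff₀ (by positivity), mul_comm]
    calc r ^ 2 * ∫ x, (inner ℝ v x : ℝ) ^ 2 ∂μ = ∫ x, (inner ℝ (r • v) x : ℝ) ^ 2 ∂μ := by
          rw [← integral_const_mul]; exact integral_congr_ae (Filter.Eventually.of_forall
            fun x => (hrw x).symm)
      _ ≤ K := hInt
  -- bound for arbitrary vectors
  have hgen : ∀ w : EuclideanSpace ℝ (Fin d),
      ∫ x, (inner ℝ w x : ℝ) ^ 2 ∂μ ≤ ‖w‖ ^ 2 * (K / r ^ 2) := by
    intro w
    rcases eq_or_ne w 0 with rfl | hw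
    · simp
    · have hnw : (0:ℝ) < ‖w‖ := norm_pos_iff.mpr hw
      set v : EuclideanSpace ℝ (Fin d) := ‖w‖⁻¹ • w with hvdef
      have hv : ‖v‖ = 1 := by
        rw [hvdef, norm_smul, norm_inv, norm_norm, inv_mul_cancel₀ hnw.ne']
      have hwv : ∀ x, (inner ℝ w x : ℝ) ^ 2 = ‖w‖ ^ 2 * (inner ℝ v x : ℝ) ^ 2 := by
        intro x
        rw [hvdef, real_inner_smul_left]
        field_simp
      calc ∫ x, (inner ℝ w x : ℝ) ^ 2 ∂μ = ‖w‖ ^ 2 * ∫ x, (inner ℝ v x : ℝ) ^ 2 ∂μ := by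
            rw [← integral_const_mul]; exact integral_congr_ae (Filter.Eventually.of_forall hwv)
        _ ≤ ‖w‖ ^ 2 * (K / r ^ 2) := by
            exact mul_le_mul_of_nonneg_left (hunit v hv) (by positivity)
  -- square root of H
  obtain ⟨B, hBpsd0, hBB0⟩ := aux_sqrt H hpsd
  have hBpsd : B.PosSemidef := hBpsd0
  have hBsymm : ∀ i j, B i j = B j i := fun i j => by simpa using (hBpsd.1.apply i j).symm
  have hBB : B * B = H := hBB0
  -- rows of B as vectors
  set w : Fin d → EuclideanSpace ℝ (Fin d) := fun k => (EuclideanSpace.equiv (Fin d) ℝ).symm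
    (fun i => B k i) with hwdef
  have hwk : ∀ k i, w k i = B k i := fun k i => rfl
  -- pointwise identity
  have hpoint : ∀ x : EuclideanSpace ℝ (Fin d),
      ∑ i, ∑ j, H i j * x i * x j = ∑ k, (inner ℝ (w k) x : ℝ) ^ 2 := by
    intro x
    have : ∀ k, (inner ℝ (w k) x : ℝ) = ∑ i, B k i * x i := by
      intro k
      rw [PiLp.inner_apply]
      simp [hwk, RCLike.inner_apply, mul_comm]
    simp only [this]
    have hH : ∀ i j, H i j = ∑ k, B i k * B k j := by
      intro i j
      rw [← hBB]; rfl
    calc ∑ i, ∑ j, H i j * x i * x j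
        = ∑ i, ∑ j, ∑ k, (B k i * x i) * (B k j * x j) := by
          refine Finset.sum_congr rfl fun i _ => Finset.sum_congr rfl fun j _ => ?_
          rw [hH i j, Finset.sum_mul, Finset.sum_mul]
          refine Finset.sum_congr rfl fun k _ => ?_
          rw [hBsymm i k]; ring
      _ = ∑ i, ∑ k, ∑ j, (B k i * x i) * (B k j * x j) :=
          by exact Finset.sum_congr rfl fun i _ => by rw [Finset.sum_comm]
      _ = ∑ k, ∑ i, ∑ j, (B k i * x i) * (B k j * x j) := by rw [Finset.sum_comm]
      _ = ∑ k, (∑ i, B k i * x i) ^ 2 := by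
          refine Finset.sum_congr rfl fun k _ => ?_
          rw [sq, Finset.sum_mul_sum]
  -- norms of rows and trace
  have htrw : ∑ k, ‖w k‖ ^ 2 = H.trace := by
    have : ∀ k, ‖w k‖ ^ 2 = H k k := by
      intro k
      rw [← real_inner_self_eq_norm_sq, PiLp.inner_apply]
      have hH : H k k = ∑ i, B k i * B i k := by rw [← hBB]; rfl
      rw [hH]
      refine Finset.sum_congr rfl fun i _ => ?_
      simp [hwk, RCLike.inner_apply, hBsymm k i, sq]
    simp only [this, Matrix.trace]
    rfl
  -- put it together
  have hKnonneg : 0 ≤ K := by positivity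
  calc ∫ x, ∑ i, ∑ j, H i j * x i * x j ∂μ
      = ∫ x, ∑ k, (inner ℝ (w k) x : ℝ) ^ 2 ∂μ :=
        integral_congr_ae (Filter.Eventually.of_forall fun x => hpoint x)
    _ = ∑ k, ∫ x, (inner ℝ (w k) x : ℝ) ^ 2 ∂μ :=
        integral_finset_sum _ fun k _ => aux_integrable μ hint (w k)
    _ ≤ ∑ k, ‖w k‖ ^ 2 * (K / r ^ 2) :=
        Finset.sum_le_sum fun k _ => hgen (w k)
    _ = (∑ k, ‖w k‖ ^ 2) * (K / r ^ 2) := by rw [Finset.sum_mul]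
    _ = H.trace * (K / r ^ 2) := by rw [htrw]
    _ ≤ r ^ 2 * (K / r ^ 2) := by
        exact mul_le_mul_of_nonneg_right htr (by positivity)
    _ = K := by field_simp
    _ ≤ 2 * (C + 1) * (b ^ 2 + r ^ 2) := by nlinarith
end

section
/- Let T be a finite nonempty set of vectors in ℝ^d, let u ∈ ℝ^d, and let b, r, ρ > 0 and B ≥ 0 with |u·x| ≤ b for every x ∈ T. Let M = {H ∈ ℝ^{d×d} : H is positive semidefinite, trace(H) ≤ r², and ∑_{i,j} |H_{ij}| ≤ ρ²}. Suppose that for every H ∈ M, (1/|T|) ∑_{x∈T} xᵀ H x ≤ B. Then for every w ∈ ℝ^d with ‖w − u‖₂ ≤ r and ‖w − u‖₁ ≤ ρ, it holds that (1/|T|) ∑_{x∈T} (w·x)² ≤ 2b² + 2B. -/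
open Finset

/-- If the average quadratic form over `T` is at most `B` for all PSD matrices
in the trace/entrywise-ℓ1 ball, then the average of `(w·x)²` is at most `2b² + 2B` for all
`w` in the ℓ2/ℓ1 ball around `u`. -/
theorem average_square_le_of_quadratic_form_le {d : ℕ}
    (T : Finset (EuclideanSpace ℝ (Fin d))) (hT : T.Nonempty)
    (u : EuclideanSpace ℝ (Fin d)) (b r ρ B : ℝ)
    (hb : 0 < b) (hr : 0 < r) (hρ : 0 < ρ) (hB : 0 ≤ B)
    (hband : ∀ x ∈ T, |(inner ℝ u x : ℝ)| ≤ b)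
    (hM : ∀ H : Matrix (Fin d) (Fin d) ℝ, H.PosSemidef → H.trace ≤ r ^ 2 →
      (∑ i, ∑ j, |H i j|) ≤ ρ ^ 2 →
      (1 / T.card) * ∑ x ∈ T, ∑ i, ∑ j, H i j * x i * x j ≤ B)
    (w : EuclideanSpace ℝ (Fin d)) (hw2 : ‖w - u‖ ≤ r) (hw1 : ∑ i, |(w - u) i| ≤ ρ) :
    (1 / T.card) * ∑ x ∈ T, (inner ℝ w x : ℝ) ^ 2 ≤ 2 * b ^ 2 + 2 * B := by
  set v : EuclideanSpace ℝ (Fin d) := w - u with hv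
  set H : Matrix (Fin d) (Fin d) ℝ := Matrix.of (fun i j => v i * v j) with hH
  have hcard : (0 : ℝ) < T.card := by
    exact_mod_cast hT.card_pos
  -- PSD
  have hpsd : H.PosSemidef := by
    have := Matrix.posSemidef_conjTranspose_mul_self (Matrix.replicateRow Unit v.ofLp)
    convert this using 2
    ext i j
    simp [hH, Matrix.mul_apply, Matrix.replicateRow_apply, mul_comm]
  -- trace
  have htr : H.trace ≤ r ^ 2 := by
    have hnorm : ‖v‖ ^ 2 = ∑ i, v i ^ 2 := by
      rw [EuclideanSpace.norm_eq]
      rw [Real.sq_sqrt (by positivity)]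
      simp [sq_abs]
    have : H.trace = ‖v‖ ^ 2 := by
      rw [hnorm]
      simp [Matrix.trace, hH, Matrix.diag, sq]
    rw [this]
    have : ‖v‖ ≤ r := hw2
    nlinarith [norm_nonneg v]
  -- ℓ1
  have hl1 : (∑ i, ∑ j, |H i j|) ≤ ρ ^ 2 := by
    have : (∑ i, ∑ j, |H i j|) = (∑ i, |v i|) * (∑ j, |v j|) := by
      rw [Finset.sum_mul_sum]
      simp [hH, abs_mul]
    rw [this]
    have h0 : (0:ℝ) ≤ ∑ i, |v i| := Finset.sum_nonneg fun i _ => abs_nonneg _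
    nlinarith [hw1]
  have hMH := hM H hpsd htr hl1
  -- quadratic form equals (inner ℝ v x)^2
  have hquad : ∀ x : EuclideanSpace ℝ (Fin d),
      (∑ i, ∑ j, H i j * x i * x j) = (inner ℝ v x : ℝ) ^ 2 := by
    intro x
    have : (inner ℝ v x : ℝ) = ∑ i, v i * x i := by
      simp [PiLp.inner_apply, mul_comm]
    rw [this, sq, Finset.sum_mul_sum]
    apply Finset.sum_congr rfl; intro i _
    apply Finset.sum_congr rfl; intro j _
    simp [hH]; ring
  have hsum : (1 / T.card : ℝ) * ∑ x ∈ T, (inner ℝ v x : ℝ) ^ 2 ≤ B := by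
    calc (1 / T.card : ℝ) * ∑ x ∈ T, (inner ℝ v x : ℝ) ^ 2
        = (1 / T.card : ℝ) * ∑ x ∈ T, ∑ i, ∑ j, H i j * x i * x j := by
          congr 1; exact Finset.sum_congr rfl fun x _ => (hquad x).symm
      _ ≤ B := hMH
  have husum : (1 / T.card : ℝ) * ∑ x ∈ T, (inner ℝ u x : ℝ) ^ 2 ≤ b ^ 2 := by
    rw [div_mul_eq_mul_div, one_mul, div_le_iff₀ hcard]
    calc ∑ x ∈ T, (inner ℝ u x : ℝ) ^ 2 ≤ ∑ x ∈ T, b ^ 2 := by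
          apply Finset.sum_le_sum; intro x hx
          have := hband x hx
          nlinarith [abs_nonneg (inner ℝ u x : ℝ), sq_abs (inner ℝ u x : ℝ)]
      _ = b ^ 2 * T.card := by rw [Finset.sum_const]; ring
  -- pointwise bound
  have hpt : ∀ x ∈ T, (inner ℝ w x : ℝ) ^ 2 ≤ 2 * (inner ℝ u x : ℝ) ^ 2 + 2 * (inner ℝ v x : ℝ) ^ 2 := by
    intro x hx
    have hw' : (inner ℝ w x : ℝ) = (inner ℝ u x : ℝ) + (inner ℝ v x : ℝ) := by
      rw [hv, ← inner_add_left]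
      congr 1
      abel
    rw [hw']
    nlinarith [sq_nonneg ((inner ℝ u x : ℝ) - (inner ℝ v x : ℝ))]
  have hfinal : (1 / T.card : ℝ) * ∑ x ∈ T, (inner ℝ w x : ℝ) ^ 2
      ≤ (1 / T.card : ℝ) * ∑ x ∈ T, (2 * (inner ℝ u x : ℝ) ^ 2 + 2 * (inner ℝ v x : ℝ) ^ 2) := by
    apply mul_le_mul_of_nonneg_left (Finset.sum_le_sum hpt) (by positivity)
  calc (1 / T.card : ℝ) * ∑ x ∈ T, (inner ℝ w x : ℝ) ^ 2
      ≤ (1 / T.card : ℝ) * ∑ x ∈ T, (2 * (inner ℝ u x : ℝ) ^ 2 + 2 * (inner ℝ v x : ℝ) ^ 2) := hfinal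
    _ = 2 * ((1 / T.card : ℝ) * ∑ x ∈ T, (inner ℝ u x : ℝ) ^ 2)
        + 2 * ((1 / T.card : ℝ) * ∑ x ∈ T, (inner ℝ v x : ℝ) ^ 2) := by
          rw [Finset.sum_add_distrib, ← Finset.mul_sum, ← Finset.mul_sum]; ring
    _ ≤ 2 * b ^ 2 + 2 * B := by nlinarith [hsum, husum]
end

section
/- Let u and v be vectors in a real inner product space with ‖u‖ = 1 and v ≠ 0. Then the angle θ(v, u) between v and u satisfies θ(v, u) ≤ π · ‖v − u‖. -/
/-- The angle between a nonzero vector `v` and a unit vector `u` is at most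
`π` times their distance. -/
theorem angle_le_pi_mul_dist {E : Type*} [NormedAddCommGroup E] [InnerProductSpace ℝ E]
    (u v : E) (hu : ‖u‖ = 1) (hv : v ≠ 0) :
    InnerProductGeometry.angle v u ≤ Real.pi * ‖v - u‖ := by
  set θ := InnerProductGeometry.angle v u with hθdef
  have hv0 : (0:ℝ) < ‖v‖ := norm_pos_iff.mpr hv
  have hθ0 : 0 ≤ θ := InnerProductGeometry.angle_nonneg v u
  have hθπ : θ ≤ Real.pi := InnerProductGeometry.angle_le_pi v u
  set t : ℝ := inner ℝ v u with ht
  have hdist : ‖v - u‖ ^ 2 = ‖v‖ ^ 2 - 2 * t + 1 := by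
    rw [← @real_inner_self_eq_norm_sq]
    simp only [inner_sub_sub_self, real_inner_self_eq_norm_sq,
      real_inner_comm u v, hu]
    rw [ht, real_inner_comm]
    ring
  have hcos : Real.cos θ * (‖v‖ * 1) = t := by
    rw [← hu]; exact InnerProductGeometry.cos_angle_mul_norm_mul_norm v u
  by_cases hhalf : θ ≤ Real.pi / 2
  · -- sin θ ≤ ‖v - u‖
    have hsin : Real.sin θ * ‖v‖ = Real.sqrt (‖v‖ ^ 2 - t * t) := by
      have := InnerProductGeometry.sin_angle_mul_norm_mul_norm v u
      rw [real_inner_self_eq_norm_sq, real_inner_self_eq_norm_sq, hu] at this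
      simpa using this
    have hsinle : Real.sin θ ≤ ‖v - u‖ := by
      have h1 : Real.sqrt (‖v‖ ^ 2 - t * t) ≤ ‖v‖ * ‖v - u‖ := by
        rw [show ‖v‖ * ‖v - u‖ = Real.sqrt ((‖v‖ * ‖v - u‖) ^ 2) from
          (Real.sqrt_sq (by positivity)).symm]
        apply Real.sqrt_le_sqrt
        have : (‖v‖ * ‖v - u‖) ^ 2 = ‖v‖ ^ 2 * (‖v‖ ^ 2 - 2 * t + 1) := by
          rw [mul_pow, hdist]
        nlinarith [sq_nonneg (‖v‖ ^ 2 - t)]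
      have : Real.sin θ * ‖v‖ ≤ ‖v‖ * ‖v - u‖ := by
        rw [hsin]; exact h1
      nlinarith
    have h2 : 2 / Real.pi * θ ≤ Real.sin θ := Real.mul_le_sin hθ0 hhalf
    have hπ : (0:ℝ) < Real.pi := Real.pi_pos
    have : 2 / Real.pi * θ ≤ ‖v - u‖ := le_trans h2 hsinle
    calc θ = Real.pi / 2 * (2 / Real.pi * θ) := by field_simp
      _ ≤ Real.pi / 2 * ‖v - u‖ := by nlinarith
      _ ≤ Real.pi * ‖v - u‖ := by nlinarith [norm_nonneg (v - u)]
  · -- cos θ ≤ 0, so t ≤ 0, ‖v - u‖ ≥ 1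
    push_neg at hhalf
    have hcosle : Real.cos θ ≤ 0 := by
      rw [← Real.cos_pi_div_two]
      exact Real.cos_le_cos_of_nonneg_of_le_pi (by positivity) hθπ hhalf.le
    have ht0 : t ≤ 0 := by nlinarith
    have h1 : (1:ℝ) ≤ ‖v - u‖ := by
      nlinarith [norm_nonneg (v - u), sq_nonneg (‖v - u‖ - 1)]
    nlinarith [Real.pi_pos]
end

section
/- Let s ≤ d be positive integers, let k ≥ 1 be an integer, let w* ∈ ℝ^d be an s-sparse unit vector, and let v ∈ ℝ^d be nonzero with angle θ(v, w*) ≤ 2^{−k−8}·π. Let v̂ = v/‖v‖₂, and let z ∈ ℝ^d be an s-sparse vector with ‖v̂ − z‖₂ ≤ ‖v̂ − w‖₂ for every s-sparse w ∈ ℝ^d. Then z ≠ 0, and the vector w' = z/‖z‖₂ satisfies ‖w' − w*‖₂ ≤ 2^{−k−4} and ‖w' − w*‖₁ ≤ √(2s)·2^{−k−4}. -/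
/-- Hard thresholding the normalization of `v` to its best s-sparse
approximation and renormalizing yields a vector close to the s-sparse unit target `w*`,
both in ℓ2 and ℓ1 norm. -/
theorem hard_threshold_normalize_close {d s : ℕ} (hs : 1 ≤ s) (hsd : s ≤ d)
    (k : ℕ) (hk : 1 ≤ k)
    (wstar : EuclideanSpace ℝ (Fin d))
    (hwsparse : {i | wstar i ≠ 0}.ncard ≤ s) (hwnorm : ‖wstar‖ = 1)
    (v : EuclideanSpace ℝ (Fin d)) (hv : v ≠ 0)
    (hangle : InnerProductGeometry.angle v wstar ≤ 2 ^ (-(k : ℝ) - 8) * Real.pi)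
    (z : EuclideanSpace ℝ (Fin d)) (hzsparse : {i | z i ≠ 0}.ncard ≤ s)
    (hbest : ∀ w : EuclideanSpace ℝ (Fin d), {i | w i ≠ 0}.ncard ≤ s →
      ‖‖v‖⁻¹ • v - z‖ ≤ ‖‖v‖⁻¹ • v - w‖) :
    z ≠ 0 ∧
      ‖‖z‖⁻¹ • z - wstar‖ ≤ 2 ^ (-(k : ℝ) - 4) ∧
      ∑ i, |(‖z‖⁻¹ • z - wstar) i| ≤ Real.sqrt (2 * s) * 2 ^ (-(k : ℝ) - 4) := by
  set vh : EuclideanSpace ℝ (Fin d) := ‖v‖⁻¹ • v with hvh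
  have hvhnorm : ‖vh‖ = 1 := by
    rw [hvh, norm_smul, norm_inv, norm_norm, inv_mul_cancel₀ (norm_ne_zero_iff.mpr hv)]
  set ε : ℝ := 2 ^ (-(k : ℝ) - 6) with hε
  have hεpos : (0:ℝ) < ε := Real.rpow_pos_of_pos (by norm_num) _
  have hεsmall : ε ≤ 2 ^ (-7 : ℝ) := by
    apply Real.rpow_le_rpow_of_exponent_le (by norm_num)
    have : (1:ℝ) ≤ (k:ℝ) := by exact_mod_cast hk
    linarith
  have hεhalf : ε ≤ 1/2 := by
    have : ε ≤ 2 ^ (-1 : ℝ) := by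
      apply Real.rpow_le_rpow_of_exponent_le (by norm_num)
      have : (0:ℝ) ≤ (k:ℝ) := Nat.cast_nonneg k
      linarith
    rw [Real.rpow_neg_one] at this
    linarith
  -- angle bound
  set θ := InnerProductGeometry.angle v wstar with hθ
  have hθnn : 0 ≤ θ := InnerProductGeometry.angle_nonneg _ _
  have hθle : θ ≤ ε := by
    have hπ : Real.pi ≤ 4 := by
      have := Real.pi_le_four; linarith
    calc θ ≤ 2 ^ (-(k : ℝ) - 8) * Real.pi := hangle
      _ ≤ 2 ^ (-(k : ℝ) - 8) * 4 :=
          mul_le_mul_of_nonneg_left hπ (Real.rpow_pos_of_pos (by norm_num) _).le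
      _ = ε := by
          rw [hε, show (-(k : ℝ) - 6) = (-(k : ℝ) - 8) + 2 by ring,
            Real.rpow_add (by norm_num), Real.rpow_two]
          ring
  -- ‖vh - wstar‖ ≤ ε
  have hanglevh : InnerProductGeometry.angle vh wstar = θ := by
    rw [hvh, hθ]
    exact InnerProductGeometry.angle_smul_left_of_pos _ _
      (inv_pos.mpr (norm_pos_iff.mpr hv))
  have hinner : inner ℝ vh wstar = Real.cos θ := by
    have := InnerProductGeometry.cos_angle vh wstar
    rw [hanglevh, hvhnorm, hwnorm] at this
    simpa using this.symm
  have h1 : ‖vh - wstar‖ ≤ ε := by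
    have hsq : ‖vh - wstar‖ ^ 2 ≤ ε ^ 2 := by
      have hcos : 1 - θ ^ 2 / 2 ≤ Real.cos θ := Real.one_sub_sq_div_two_le_cos
      have hns : ‖vh - wstar‖ ^ 2 = 2 - 2 * Real.cos θ := by
        rw [@norm_sub_sq_real, hvhnorm, hwnorm, hinner]; ring
      have hθsq : θ ^ 2 ≤ ε ^ 2 := by nlinarith
      nlinarith
    calc ‖vh - wstar‖ = Real.sqrt (‖vh - wstar‖ ^ 2) := by
          rw [Real.sqrt_sq (norm_nonneg _)]
      _ ≤ Real.sqrt (ε ^ 2) := Real.sqrt_le_sqrt hsq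
      _ = ε := Real.sqrt_sq hεpos.le
  -- ‖vh - z‖ ≤ ε
  have h2 : ‖vh - z‖ ≤ ε := (hbest wstar hwsparse).trans h1
  -- ‖z‖ close to 1
  have hz1 : |‖z‖ - 1| ≤ ε := by
    have := abs_norm_sub_norm_le z vh
    rw [hvhnorm] at this
    calc |‖z‖ - 1| ≤ ‖z - vh‖ := this
      _ = ‖vh - z‖ := norm_sub_rev _ _
      _ ≤ ε := h2
  have hznorm_pos : 0 < ‖z‖ := by
    have h := abs_le.mp hz1
    linarith [h.1]
  have hzne : z ≠ 0 := norm_pos_iff.mp hznorm_pos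
  -- main L2 bound
  have hwz : ‖‖z‖⁻¹ • z - z‖ ≤ ε := by
    have : ‖z‖⁻¹ • z - z = (‖z‖⁻¹ - 1) • z := by
      rw [sub_smul, one_smul]
    rw [this, norm_smul, Real.norm_eq_abs]
    have : |‖z‖⁻¹ - 1| * ‖z‖ = |1 - ‖z‖| := by
      rw [← abs_of_pos hznorm_pos, ← abs_mul]
      rw [abs_of_pos hznorm_pos]
      rw [sub_mul, inv_mul_cancel₀ hznorm_pos.ne', one_mul]
    rw [this, abs_sub_comm]
    exact hz1
  have hL2 : ‖‖z‖⁻¹ • z - wstar‖ ≤ 2 ^ (-(k : ℝ) - 4) := by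
    have h4ε : 3 * ε ≤ 2 ^ (-(k : ℝ) - 4) := by
      have : (2:ℝ) ^ (-(k : ℝ) - 4) = 4 * ε := by
        rw [hε, show (-(k : ℝ) - 4) = (-(k : ℝ) - 6) + 2 by ring,
          Real.rpow_add (by norm_num), Real.rpow_two]
        ring
      linarith
    calc ‖‖z‖⁻¹ • z - wstar‖
        ≤ ‖‖z‖⁻¹ • z - z‖ + ‖z - vh‖ + ‖vh - wstar‖ := by
          have := norm_sub_le_norm_sub_add_norm_sub (‖z‖⁻¹ • z) z wstar
          have h2' := norm_sub_le_norm_sub_add_norm_sub z vh wstar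
          linarith
      _ ≤ ε + ε + ε := by
          have : ‖z - vh‖ = ‖vh - z‖ := norm_sub_rev _ _
          rw [this]
          gcongr
      _ = 3 * ε := by ring
      _ ≤ _ := h4ε
  refine ⟨hzne, hL2, ?_⟩
  -- L1 bound
  set u : EuclideanSpace ℝ (Fin d) := ‖z‖⁻¹ • z - wstar with hu
  set T : Finset (Fin d) := Finset.univ.filter (fun i => z i ≠ 0 ∨ wstar i ≠ 0) with hT
  have hTcard : (T.card : ℝ) ≤ 2 * s := by
    have h1' : T.card = ({i | z i ≠ 0} ∪ {i | wstar i ≠ 0}).ncard := by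
      rw [Set.ncard_eq_toFinset_card']
      congr 1
      ext i
      simp [hT, Set.mem_union]
    have h2' : ({i | z i ≠ 0} ∪ {i | wstar i ≠ 0}).ncard ≤ 2 * s := by
      have := Set.ncard_union_le {i | z i ≠ 0} {i | wstar i ≠ 0}
      omega
    rw [h1']
    exact_mod_cast h2'
  have huzero : ∀ i ∉ T, u i = 0 := by
    intro i hi
    simp only [hT, Finset.mem_filter, Finset.mem_univ, true_and, not_or, not_not] at hi
    simp [hu, PiLp.sub_apply, PiLp.smul_apply, hi.1, hi.2]
  have hsum : ∑ i, |u i| = ∑ i ∈ T, |u i| := by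
    rw [← Finset.sum_subset (Finset.subset_univ T)]
    intro i _ hi
    rw [huzero i hi, abs_zero]
  have hnormu : ‖u‖ = Real.sqrt (∑ i, u i ^ 2) := by
    rw [EuclideanSpace.norm_eq]
    congr 1
    apply Finset.sum_congr rfl
    intro i _
    rw [Real.norm_eq_abs, sq_abs]
  have hCS : (∑ i ∈ T, |u i|) ^ 2 ≤ (T.card : ℝ) * ∑ i ∈ T, u i ^ 2 := by
    have := sq_sum_le_card_mul_sum_sq (s := T) (f := fun i => |u i|)
    simpa [sq_abs] using this
  have hsumsq : ∑ i ∈ T, u i ^ 2 ≤ ∑ i, u i ^ 2 :=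
    Finset.sum_le_sum_of_subset_of_nonneg (Finset.subset_univ T)
      (fun i _ _ => sq_nonneg _)
  have hL1sq : (∑ i, |u i|) ^ 2 ≤ 2 * s * ‖u‖ ^ 2 := by
    rw [hsum, hnormu, Real.sq_sqrt (Finset.sum_nonneg fun i _ => sq_nonneg _)]
    calc (∑ i ∈ T, |u i|) ^ 2 ≤ (T.card : ℝ) * ∑ i ∈ T, u i ^ 2 := hCS
      _ ≤ 2 * s * ∑ i, u i ^ 2 := by
          apply mul_le_mul hTcard hsumsq
            (Finset.sum_nonneg fun i _ => sq_nonneg _) (by positivity)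
  have h2s : (0:ℝ) ≤ 2 * s := by positivity
  calc ∑ i, |u i| = Real.sqrt ((∑ i, |u i|) ^ 2) := by
        rw [Real.sqrt_sq (Finset.sum_nonneg fun i _ => abs_nonneg _)]
    _ ≤ Real.sqrt (2 * s * ‖u‖ ^ 2) := Real.sqrt_le_sqrt hL1sq
    _ = Real.sqrt (2 * s) * ‖u‖ := by
        rw [Real.sqrt_mul h2s, Real.sqrt_sq (norm_nonneg _)]
    _ ≤ Real.sqrt (2 * s) * 2 ^ (-(k : ℝ) - 4) := by
        apply mul_le_mul_of_nonneg_left hL2 (Real.sqrt_nonneg _)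
end

section
/- Let d ≥ 1 and n ≥ 1 be integers, let u, x₁, …, xₙ ∈ ℝ^d, let z₁, …, zₙ ∈ ℝ, and let b, r, ρ, λ > 0. Suppose |u·xᵢ| ≤ b and |zᵢ| ≤ λ for all 1 ≤ i ≤ n. Let W = {w ∈ ℝ^d : ‖w − u‖₂ ≤ r and ‖w − u‖₁ ≤ ρ}. Then the average over all sign vectors σ ∈ {−1, 1}ⁿ (each with probability 2^{−n}) of sup_{w ∈ W} | ∑_{i=1}^n σᵢ zᵢ (w·xᵢ) | is at most λ b √n + ρ λ √(2 n log(2d)) · max_{1≤i≤n} ‖xᵢ‖_∞. -/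
open Finset

private lemma sgn_orth {n : ℕ} (i j : Fin n) :
    ∑ σ : Fin n → Bool, (if σ i then (1:ℝ) else -1) * (if σ j then (1:ℝ) else -1)
      = if i = j then (2:ℝ)^n else 0 := by
  by_cases h : i = j
  · subst h
    rw [if_pos rfl]
    have h1 : ∀ σ : Fin n → Bool,
        (if σ i then (1:ℝ) else -1) * (if σ i then (1:ℝ) else -1) = 1 := by
      intro σ; cases σ i <;> norm_num
    rw [Finset.sum_congr rfl fun σ _ => h1 σ, Finset.sum_const, Finset.card_univ]
    simp [Fintype.card_fun]
  · rw [if_neg h]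
    have hb : Function.Bijective (fun σ : Fin n → Bool => Function.update σ i (!σ i)) := by
      apply Function.Involutive.bijective
      intro σ; funext k
      by_cases hk : k = i
      · subst hk; simp
      · simp [Function.update_of_ne hk]
    have key := Fintype.sum_bijective _ hb
      (fun σ : Fin n → Bool => -((if σ i then (1:ℝ) else -1) * (if σ j then (1:ℝ) else -1)))
      (fun σ : Fin n → Bool => (if σ i then (1:ℝ) else -1) * (if σ j then (1:ℝ) else -1))
      (by
        intro σ
        simp only [Function.update_self, Function.update_of_ne (Ne.symm h)]
        cases hσ : σ i <;> cases σ j <;> norm_num)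
    rw [Finset.sum_neg_distrib] at key
    linarith

private lemma sum_sq_eq {n : ℕ} (a : Fin n → ℝ) :
    ∑ σ : Fin n → Bool, (∑ i, (if σ i then (1:ℝ) else -1) * a i) ^ 2
      = 2 ^ n * ∑ i, a i ^ 2 := by
  have expand : ∀ σ : Fin n → Bool, (∑ i, (if σ i then (1:ℝ) else -1) * a i) ^ 2
      = ∑ i, ∑ j, ((if σ i then (1:ℝ) else -1) * (if σ j then (1:ℝ) else -1)) * (a i * a j) := by
    intro σ
    rw [sq, Finset.sum_mul_sum]
    exact Finset.sum_congr rfl fun i _ => Finset.sum_congr rfl fun j _ => by ring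
  rw [Finset.sum_congr rfl fun σ _ => expand σ, Finset.sum_comm]
  have swap2 : ∀ i : Fin n,
      (∑ σ : Fin n → Bool, ∑ j,
        ((if σ i then (1:ℝ) else -1) * (if σ j then (1:ℝ) else -1)) * (a i * a j))
      = ∑ j, (∑ σ : Fin n → Bool,
          (if σ i then (1:ℝ) else -1) * (if σ j then (1:ℝ) else -1)) * (a i * a j) := by
    intro i
    rw [Finset.sum_comm]
    exact Finset.sum_congr rfl fun j _ => by rw [← Finset.sum_mul]
  rw [Finset.sum_congr rfl fun i _ => swap2 i]
  have diag : ∀ i : Fin n,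
      (∑ j, (∑ σ : Fin n → Bool,
          (if σ i then (1:ℝ) else -1) * (if σ j then (1:ℝ) else -1)) * (a i * a j))
      = 2 ^ n * a i ^ 2 := by
    intro i
    rw [Finset.sum_congr rfl fun j _ => by rw [sgn_orth i j]]
    simp [Finset.sum_ite_eq, sq]
  rw [Finset.sum_congr rfl fun i _ => diag i, ← Finset.mul_sum]

private lemma khintchine {n : ℕ} (a : Fin n → ℝ) :
    ∑ σ : Fin n → Bool, |∑ i, (if σ i then (1:ℝ) else -1) * a i|
      ≤ 2 ^ n * Real.sqrt (∑ i, a i ^ 2) := by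
  set A : (Fin n → Bool) → ℝ := fun σ => ∑ i, (if σ i then (1:ℝ) else -1) * a i with hA
  have hcs := Finset.sum_mul_sq_le_sq_mul_sq Finset.univ
      (fun _ : Fin n → Bool => (1:ℝ)) (fun σ => |A σ|)
  simp only [one_mul, one_pow, sq_abs] at hcs
  have hsq : ∑ σ : Fin n → Bool, A σ ^ 2 = 2 ^ n * ∑ i, a i ^ 2 := sum_sq_eq a
  have hcard : (∑ _σ : Fin n → Bool, (1:ℝ)) = 2 ^ n := by
    rw [Finset.sum_const, Finset.card_univ]; simp [Fintype.card_fun]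
  rw [hcard, hsq] at hcs
  have h1 : (∑ σ : Fin n → Bool, |A σ|) ^ 2 ≤ (2 ^ n * Real.sqrt (∑ i, a i ^ 2)) ^ 2 := by
    have : (2 ^ n * Real.sqrt (∑ i, a i ^ 2)) ^ 2 = 2 ^ n * (2 ^ n * ∑ i, a i ^ 2) := by
      rw [mul_pow, Real.sq_sqrt (by positivity)]; ring
    rw [this]; exact hcs
  have h2 : (0:ℝ) ≤ 2 ^ n * Real.sqrt (∑ i, a i ^ 2) := by positivity
  nlinarith [Finset.sum_nonneg (fun σ (_ : σ ∈ (Finset.univ : Finset (Fin n → Bool))) => abs_nonneg (A σ))]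

private lemma mgf_bound {n : ℕ} (c : Fin n → ℝ) (t : ℝ) :
    ∑ σ : Fin n → Bool, Real.exp (t * ∑ i, (if σ i then (1:ℝ) else -1) * c i)
      ≤ 2 ^ n * Real.exp (t ^ 2 * (∑ i, c i ^ 2) / 2) := by
  have factor : ∀ σ : Fin n → Bool,
      Real.exp (t * ∑ i, (if σ i then (1:ℝ) else -1) * c i)
        = ∏ i, Real.exp (t * ((if σ i then (1:ℝ) else -1) * c i)) := by
    intro σ; rw [← Real.exp_sum, Finset.mul_sum]
  rw [Finset.sum_congr rfl fun σ _ => factor σ, ← Fintype.prod_sum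
    (fun (i : Fin n) (b : Bool) => Real.exp (t * ((if b then (1:ℝ) else -1) * c i)))]
  calc ∏ i, ∑ b : Bool, Real.exp (t * ((if b then (1:ℝ) else -1) * c i))
      ≤ ∏ i, 2 * Real.exp (t ^ 2 * c i ^ 2 / 2) := by
        apply Finset.prod_le_prod (fun i _ => by positivity)
        intro i _
        have hbool : (∑ b : Bool, Real.exp (t * ((if b then (1:ℝ) else -1) * c i)))
            = Real.exp (t * c i) + Real.exp (-(t * c i)) := by
          simp [Fintype.sum_bool]
        rw [hbool]
        have hch := Real.cosh_le_exp_half_sq (t * c i)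
        rw [Real.cosh_eq] at hch
        have : t ^ 2 * c i ^ 2 / 2 = (t * c i) ^ 2 / 2 := by ring
        rw [this]
        linarith
    _ = 2 ^ n * Real.exp (t ^ 2 * (∑ i, c i ^ 2) / 2) := by
        rw [Finset.prod_mul_distrib, Finset.prod_const, Finset.card_univ, ← Real.exp_sum]
        congr 1
        · simp
        · simp [Finset.mul_sum, Finset.sum_div]

private lemma jensen_exp {I : Type*} [Fintype I] [Nonempty I] (g : I → ℝ) :
    Real.exp ((∑ σ : I, g σ) / (Fintype.card I : ℝ))
      ≤ (∑ σ : I, Real.exp (g σ)) / (Fintype.card I : ℝ) := by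
  have hcard : (0:ℝ) < (Fintype.card I : ℝ) := by
    exact_mod_cast Fintype.card_pos
  have h := convexOn_exp.map_sum_le (t := Finset.univ)
      (w := fun _ : I => ((Fintype.card I : ℝ))⁻¹) (p := g)
      (fun _ _ => by positivity)
      (by rw [Finset.sum_const, Finset.card_univ, nsmul_eq_mul]; field_simp)
      (fun _ _ => Set.mem_univ _)
  calc Real.exp ((∑ σ : I, g σ) / (Fintype.card I : ℝ))
      = Real.exp (∑ σ : I, ((Fintype.card I : ℝ))⁻¹ • g σ) := by
        congr 1
        simp [div_eq_inv_mul, Finset.mul_sum, smul_eq_mul]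
    _ ≤ ∑ σ : I, ((Fintype.card I : ℝ))⁻¹ * Real.exp (g σ) := h
    _ = (∑ σ : I, Real.exp (g σ)) / (Fintype.card I : ℝ) := by
        rw [← Finset.mul_sum, div_eq_inv_mul]

/-- Rademacher complexity bound for the localized class
`W = {w : ‖w−u‖₂ ≤ r, ‖w−u‖₁ ≤ ρ}` with bounded multipliers `zᵢ` and band condition
`|u·xᵢ| ≤ b`. -/
theorem rademacher_localized_class {d n : ℕ} (hd : 1 ≤ d) (hn : 1 ≤ n)
    (u : EuclideanSpace ℝ (Fin d)) (x : Fin n → EuclideanSpace ℝ (Fin d))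
    (z : Fin n → ℝ) (b r ρ lam : ℝ)
    (hb : 0 < b) (hr : 0 < r) (hρ : 0 < ρ) (hlam : 0 < lam)
    (hband : ∀ i, |(inner ℝ u (x i) : ℝ)| ≤ b)
    (hz : ∀ i, |z i| ≤ lam) :
    (∑ σ : Fin n → Bool,
        ⨆ w : {w : EuclideanSpace ℝ (Fin d) // ‖w - u‖ ≤ r ∧ ∑ j, |(w - u) j| ≤ ρ},
          |∑ i, (if σ i then (1 : ℝ) else -1) * z i * (inner ℝ w.1 (x i) : ℝ)|) / 2 ^ n
      ≤ lam * b * Real.sqrt n + ρ * lam * Real.sqrt (2 * n * Real.log (2 * d)) *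
        Finset.univ.sup' ⟨⟨0, hn⟩, Finset.mem_univ _⟩
          (fun i => Finset.univ.sup' ⟨⟨0, hd⟩, Finset.mem_univ _⟩ (fun j => |x i j|)) := by
  classical
  have neD : (Finset.univ : Finset (Fin d)).Nonempty := ⟨⟨0, hd⟩, Finset.mem_univ _⟩
  set M : ℝ := Finset.univ.sup' ⟨⟨0, hn⟩, Finset.mem_univ _⟩
      (fun i => Finset.univ.sup' ⟨⟨0, hd⟩, Finset.mem_univ _⟩ (fun j => |x i j|)) with hMdef
  have hMx : ∀ i j, |x i j| ≤ M := by
    intro i j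
    refine le_trans (Finset.le_sup' (fun j => |x i j|) (Finset.mem_univ j)) ?_
    exact Finset.le_sup' (fun i => Finset.univ.sup' ⟨⟨0, hd⟩, Finset.mem_univ _⟩
      (fun j => |x i j|)) (Finset.mem_univ i)
  have hM0 : 0 ≤ M := le_trans (abs_nonneg (x ⟨0, hn⟩ ⟨0, hd⟩)) (hMx _ _)
  set a : Fin n → ℝ := fun i => z i * (inner ℝ u (x i) : ℝ) with ha
  set c : Fin n → Fin d → ℝ := fun i j => z i * x i j with hc
  have hab : ∀ i, |a i| ≤ lam * b := by
    intro i
    rw [ha, abs_mul]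
    exact mul_le_mul (hz i) (hband i) (abs_nonneg _) hlam.le
  have hcb : ∀ i j, |c i j| ≤ lam * M := by
    intro i j
    rw [hc, abs_mul]
    exact mul_le_mul (hz i) (hMx i j) (abs_nonneg _) hlam.le
  set v : (Fin n → Bool) → Fin d → ℝ :=
    fun σ j => ∑ i, (if σ i then (1:ℝ) else -1) * c i j with hv
  set V : (Fin n → Bool) → ℝ := fun σ => Finset.univ.sup' neD (fun j => |v σ j|) with hV
  have hV0 : ∀ σ, 0 ≤ V σ := fun σ =>
    le_trans (abs_nonneg (v σ ⟨0, hd⟩))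
      (Finset.le_sup' (fun j => |v σ j|) (Finset.mem_univ ⟨0, hd⟩))
  set A : (Fin n → Bool) → ℝ := fun σ => ∑ i, (if σ i then (1:ℝ) else -1) * a i with hA
  have pos2n : (0:ℝ) < 2 ^ n := by positivity
  haveI : Nonempty {w : EuclideanSpace ℝ (Fin d) // ‖w - u‖ ≤ r ∧ ∑ j, |(w - u) j| ≤ ρ} :=
    ⟨⟨u, by simp [hr.le, hρ.le]⟩⟩
  -- pointwise bound on the sup
  have step1 : ∀ σ : Fin n → Bool,
      (⨆ w : {w : EuclideanSpace ℝ (Fin d) // ‖w - u‖ ≤ r ∧ ∑ j, |(w - u) j| ≤ ρ},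
          |∑ i, (if σ i then (1 : ℝ) else -1) * z i * (inner ℝ w.1 (x i) : ℝ)|)
        ≤ |A σ| + ρ * V σ := by
    intro σ
    apply ciSup_le
    rintro ⟨w, hw2, hw1⟩
    have hinner : ∀ i, (inner ℝ w (x i) : ℝ) = (inner ℝ u (x i) : ℝ) + ∑ j, (w - u) j * x i j := by
      intro i
      have : (inner ℝ (w - u) (x i) : ℝ) = (inner ℝ w (x i) : ℝ) - (inner ℝ u (x i) : ℝ) := by
        rw [inner_sub_left]
      have hcoord : (inner ℝ (w - u) (x i) : ℝ) = ∑ j, (w - u) j * x i j := by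
        rw [PiLp.inner_apply]
        exact Finset.sum_congr rfl fun j _ => by simp [RCLike.inner_apply, mul_comm]
      linarith [hcoord ▸ this]
    have hsplit : ∑ i, (if σ i then (1 : ℝ) else -1) * z i * (inner ℝ w (x i) : ℝ)
        = A σ + ∑ j, (w - u) j * v σ j := by
      rw [Finset.sum_congr rfl fun i _ => by rw [hinner i]]
      have : ∑ i, (if σ i then (1 : ℝ) else -1) * z i *
            ((inner ℝ u (x i) : ℝ) + ∑ j, (w - u) j * x i j)
          = A σ + ∑ i, ∑ j, (if σ i then (1 : ℝ) else -1) * z i * ((w - u) j * x i j) := by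
        rw [hA]
        rw [← Finset.sum_add_distrib]
        refine Finset.sum_congr rfl fun i _ => ?_
        rw [mul_add, Finset.mul_sum, mul_assoc]
      rw [this, Finset.sum_comm]
      congr 1
      refine Finset.sum_congr rfl fun j _ => ?_
      rw [hv, Finset.mul_sum]
      refine Finset.sum_congr rfl fun i _ => ?_
      rw [hc]; ring
    rw [hsplit]
    refine le_trans (abs_add_le _ _) (add_le_add_right ?_ _)
    calc |∑ j, (w - u) j * v σ j| ≤ ∑ j, |(w - u) j * v σ j| :=
          Finset.abs_sum_le_sum_abs _ _
      _ ≤ ∑ j, |(w - u) j| * V σ := by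
          refine Finset.sum_le_sum fun j _ => ?_
          rw [abs_mul]
          exact mul_le_mul_of_nonneg_left
            (Finset.le_sup' (fun j => |v σ j|) (Finset.mem_univ j)) (abs_nonneg _)
      _ = (∑ j, |(w - u) j|) * V σ := by rw [Finset.sum_mul]
      _ ≤ ρ * V σ := mul_le_mul_of_nonneg_right hw1 (hV0 σ)
  -- sum the pointwise bound
  have step2 : (∑ σ : Fin n → Bool,
        ⨆ w : {w : EuclideanSpace ℝ (Fin d) // ‖w - u‖ ≤ r ∧ ∑ j, |(w - u) j| ≤ ρ},
          |∑ i, (if σ i then (1 : ℝ) else -1) * z i * (inner ℝ w.1 (x i) : ℝ)|) / 2 ^ n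
      ≤ (∑ σ : Fin n → Bool, |A σ|) / 2 ^ n + ρ * ((∑ σ : Fin n → Bool, V σ) / 2 ^ n) := by
    calc (∑ σ : Fin n → Bool,
        ⨆ w : {w : EuclideanSpace ℝ (Fin d) // ‖w - u‖ ≤ r ∧ ∑ j, |(w - u) j| ≤ ρ},
          |∑ i, (if σ i then (1 : ℝ) else -1) * z i * (inner ℝ w.1 (x i) : ℝ)|) / 2 ^ n
        ≤ (∑ σ : Fin n → Bool, (|A σ| + ρ * V σ)) / 2 ^ n := by
          gcongr with σ hσ
          exact step1 σ
      _ = (∑ σ : Fin n → Bool, |A σ|) / 2 ^ n + ρ * ((∑ σ : Fin n → Bool, V σ) / 2 ^ n) := by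
          rw [Finset.sum_add_distrib, ← Finset.mul_sum]
          ring
  -- Khintchine term
  have term1 : (∑ σ : Fin n → Bool, |A σ|) / 2 ^ n ≤ lam * b * Real.sqrt n := by
    have hk : ∑ σ : Fin n → Bool, |A σ| ≤ 2 ^ n * Real.sqrt (∑ i, a i ^ 2) := khintchine a
    have hnn : (0:ℝ) ≤ (n:ℝ) := Nat.cast_nonneg n
    have hsum : ∑ i, a i ^ 2 ≤ n * (lam * b) ^ 2 := by
      calc ∑ i, a i ^ 2 ≤ ∑ _i : Fin n, (lam * b) ^ 2 := by
            refine Finset.sum_le_sum fun i _ => ?_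
            rw [← sq_abs]
            exact pow_le_pow_left₀ (abs_nonneg _) (hab i) 2
        _ = n * (lam * b) ^ 2 := by
            rw [Finset.sum_const, Finset.card_univ, Fintype.card_fin, nsmul_eq_mul]
    have h2 : Real.sqrt (∑ i, a i ^ 2) ≤ lam * b * Real.sqrt n := by
      calc Real.sqrt (∑ i, a i ^ 2) ≤ Real.sqrt ((n:ℝ) * (lam * b) ^ 2) := Real.sqrt_le_sqrt hsum
        _ = lam * b * Real.sqrt n := by
            rw [Real.sqrt_mul hnn, Real.sqrt_sq (by positivity)]
            ring
    rw [div_le_iff₀ pos2n]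
    calc ∑ σ : Fin n → Bool, |A σ| ≤ 2 ^ n * Real.sqrt (∑ i, a i ^ 2) := hk
      _ ≤ 2 ^ n * (lam * b * Real.sqrt n) := by
          exact mul_le_mul_of_nonneg_left h2 (by positivity)
      _ = lam * b * Real.sqrt n * 2 ^ n := by ring
  -- Massart term
  have term2 : (∑ σ : Fin n → Bool, V σ) / 2 ^ n
      ≤ lam * M * Real.sqrt (2 * (n:ℝ) * Real.log (2 * (d:ℝ))) := by
    rcases eq_or_lt_of_le hM0 with hM | hM
    · have hVz : ∀ σ, V σ = 0 := by
        intro σ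
        refine le_antisymm ?_ (hV0 σ)
        refine Finset.sup'_le _ _ fun j _ => ?_
        have hcz : ∀ i, c i j = 0 := by
          intro i
          have h1 := hcb i j
          rw [← hM, mul_zero] at h1
          exact abs_eq_zero.mp (le_antisymm h1 (abs_nonneg _))
        have : v σ j = 0 := Finset.sum_eq_zero fun i _ => by rw [hcz i, mul_zero]
        rw [this, abs_zero]
      have hz0 : ∑ σ : Fin n → Bool, V σ = 0 := Finset.sum_eq_zero fun σ _ => hVz σ
      rw [hz0, zero_div]
      exact mul_nonneg (mul_nonneg hlam.le hM0) (Real.sqrt_nonneg _)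
    · set L := Real.log (2 * (d:ℝ)) with hLdef
      have hd1 : (1:ℝ) ≤ (d:ℝ) := by exact_mod_cast hd
      have hLpos : 0 < L := Real.log_pos (by linarith)
      have hnpos : (0:ℝ) < (n:ℝ) := by exact_mod_cast hn
      set P : ℝ := lam * M * Real.sqrt n with hPdef
      have hPpos : 0 < P := by
        have := Real.sqrt_pos.2 hnpos
        positivity
      set t : ℝ := Real.sqrt (2 * L) / P with htdef
      have hspos : 0 < Real.sqrt (2 * L) := Real.sqrt_pos.2 (by linarith)
      have hs2 : Real.sqrt (2 * L) ^ 2 = 2 * L := Real.sq_sqrt (by linarith)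
      have htpos : 0 < t := div_pos hspos hPpos
      have hP2 : ∀ j, ∑ i, c i j ^ 2 ≤ P ^ 2 := by
        intro j
        have hPsq : P ^ 2 = (n:ℝ) * (lam * M) ^ 2 := by
          rw [hPdef, mul_pow, Real.sq_sqrt hnpos.le]
          ring
        rw [hPsq]
        calc ∑ i, c i j ^ 2 ≤ ∑ _i : Fin n, (lam * M) ^ 2 := by
              refine Finset.sum_le_sum fun i _ => ?_
              rw [← sq_abs]
              exact pow_le_pow_left₀ (abs_nonneg _) (hcb i j) 2
          _ = (n:ℝ) * (lam * M) ^ 2 := by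
              rw [Finset.sum_const, Finset.card_univ, Fintype.card_fin, nsmul_eq_mul]
      have hmgf : ∀ s : ℝ, s ^ 2 = t ^ 2 → ∀ j,
          ∑ σ : Fin n → Bool, Real.exp (s * v σ j) ≤ 2 ^ n * Real.exp (t ^ 2 * P ^ 2 / 2) := by
        intro s hs j
        calc ∑ σ : Fin n → Bool, Real.exp (s * v σ j)
            ≤ 2 ^ n * Real.exp (s ^ 2 * (∑ i, c i j ^ 2) / 2) := mgf_bound (fun i => c i j) s
          _ ≤ 2 ^ n * Real.exp (t ^ 2 * P ^ 2 / 2) := by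
              rw [hs]
              have : t ^ 2 * (∑ i, c i j ^ 2) / 2 ≤ t ^ 2 * P ^ 2 / 2 := by
                have := hP2 j
                nlinarith [sq_nonneg t]
              exact mul_le_mul_of_nonneg_left (Real.exp_le_exp.2 this) (by positivity)
      have hexpV : ∀ σ, Real.exp (t * V σ)
          ≤ ∑ j, (Real.exp (t * v σ j) + Real.exp (-t * v σ j)) := by
        intro σ
        obtain ⟨j0, _, hj0⟩ := Finset.exists_mem_eq_sup' neD (fun j => |v σ j|)
        have h1 : Real.exp (t * V σ) ≤ Real.exp (t * v σ j0) + Real.exp (-t * v σ j0) := by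
          rw [hV]
          simp only []
          rw [hj0]
          rcases abs_cases (v σ j0) with ⟨he, _⟩ | ⟨he, _⟩
          · rw [he]
            exact le_add_of_nonneg_right (Real.exp_pos _).le
          · rw [he, show t * -(v σ j0) = -t * v σ j0 from by ring]
            exact le_add_of_nonneg_left (Real.exp_pos _).le
        exact le_trans h1 (Finset.single_le_sum
          (f := fun j => Real.exp (t * v σ j) + Real.exp (-t * v σ j))
          (fun j _ => by positivity) (Finset.mem_univ j0))
      have hsumexp : ∑ σ : Fin n → Bool, Real.exp (t * V σ)
          ≤ (2 * (d:ℝ)) * (2 ^ n * Real.exp (t ^ 2 * P ^ 2 / 2)) := by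
        calc ∑ σ : Fin n → Bool, Real.exp (t * V σ)
            ≤ ∑ σ : Fin n → Bool, ∑ j, (Real.exp (t * v σ j) + Real.exp (-t * v σ j)) :=
              Finset.sum_le_sum fun σ _ => hexpV σ
          _ = ∑ j, (∑ σ : Fin n → Bool, Real.exp (t * v σ j)
                + ∑ σ : Fin n → Bool, Real.exp (-t * v σ j)) := by
              rw [Finset.sum_comm]
              exact Finset.sum_congr rfl fun j _ => Finset.sum_add_distrib
          _ ≤ ∑ _j : Fin d, (2 ^ n * Real.exp (t ^ 2 * P ^ 2 / 2)
                + 2 ^ n * Real.exp (t ^ 2 * P ^ 2 / 2)) :=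
              Finset.sum_le_sum fun j _ => add_le_add (hmgf t rfl j) (hmgf (-t) (by ring) j)
          _ = (2 * (d:ℝ)) * (2 ^ n * Real.exp (t ^ 2 * P ^ 2 / 2)) := by
              rw [Finset.sum_const, Finset.card_univ, Fintype.card_fin, nsmul_eq_mul]
              ring
      have hcardB : ((Fintype.card (Fin n → Bool)) : ℝ) = 2 ^ n := by
        simp [Fintype.card_fun]
      have hjen := jensen_exp (fun σ : Fin n → Bool => t * V σ)
      rw [hcardB] at hjen
      have key : Real.exp (t * ((∑ σ : Fin n → Bool, V σ) / 2 ^ n))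
          ≤ Real.exp (L + t ^ 2 * P ^ 2 / 2) := by
        have e1 : t * ((∑ σ : Fin n → Bool, V σ) / 2 ^ n)
            = (∑ σ : Fin n → Bool, t * V σ) / 2 ^ n := by
          rw [← Finset.mul_sum]
          ring
        rw [e1]
        refine le_trans hjen ?_
        calc (∑ σ : Fin n → Bool, Real.exp (t * V σ)) / 2 ^ n
            ≤ ((2 * (d:ℝ)) * (2 ^ n * Real.exp (t ^ 2 * P ^ 2 / 2))) / 2 ^ n := by
              exact div_le_div_of_nonneg_right hsumexp pos2n.le
          _ = (2 * (d:ℝ)) * Real.exp (t ^ 2 * P ^ 2 / 2) := by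
              field_simp
          _ = Real.exp (L + t ^ 2 * P ^ 2 / 2) := by
              rw [Real.exp_add, hLdef, Real.exp_log (by linarith)]
      have hlog : t * ((∑ σ : Fin n → Bool, V σ) / 2 ^ n) ≤ L + t ^ 2 * P ^ 2 / 2 :=
        Real.exp_le_exp.mp key
      have hEV : (∑ σ : Fin n → Bool, V σ) / 2 ^ n ≤ L / t + t * P ^ 2 / 2 := by
        have h2 : t * (L / t + t * P ^ 2 / 2) = L + t ^ 2 * P ^ 2 / 2 := by
          field_simp
        rw [← h2] at hlog
        exact (mul_le_mul_iff_right₀ htpos).mp hlog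
      have heval : L / t + t * P ^ 2 / 2 = P * Real.sqrt (2 * L) := by
        have h1 : L / t = Real.sqrt (2 * L) * P / 2 := by
          rw [htdef, div_div_eq_mul_div,
            show L = Real.sqrt (2 * L) ^ 2 / 2 from by rw [hs2]; ring]
          field_simp
          rw [Real.sq_sqrt (by linarith : (0:ℝ) ≤ 2 * L), Real.sq_sqrt (by linarith : (0:ℝ) ≤ 2 * L)]
        have h2 : t * P ^ 2 / 2 = Real.sqrt (2 * L) * P / 2 := by
          rw [htdef]
          field_simp
        rw [h1, h2]
        ring
      have hsplitsqrt : Real.sqrt (2 * (n:ℝ) * L) = Real.sqrt n * Real.sqrt (2 * L) := by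
        rw [← Real.sqrt_mul hnpos.le, show (n:ℝ) * (2 * L) = 2 * (n:ℝ) * L from by ring]
      calc (∑ σ : Fin n → Bool, V σ) / 2 ^ n ≤ L / t + t * P ^ 2 / 2 := hEV
        _ = P * Real.sqrt (2 * L) := heval
        _ = lam * M * Real.sqrt (2 * (n:ℝ) * L) := by
            rw [hsplitsqrt, hPdef]
            ring
  -- assemble
  refine le_trans step2 ?_
  refine add_le_add term1 ?_
  calc ρ * ((∑ σ : Fin n → Bool, V σ) / 2 ^ n)
      ≤ ρ * (lam * M * Real.sqrt (2 * (n:ℝ) * Real.log (2 * (d:ℝ)))) :=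
        mul_le_mul_of_nonneg_left term2 hρ.le
    _ = ρ * lam * Real.sqrt (2 * (n:ℝ) * Real.log (2 * (d:ℝ))) * M := by ring
end

section
/- Let d ≥ 1 and n ≥ 1 be integers, let x₁, …, xₙ ∈ ℝ^d, and let ρ > 0. Then the average over all sign vectors σ ∈ {−1, 1}ⁿ (each with probability 2^{−n}) of sup{ | ∑_{i=1}^n σᵢ · xᵢᵀ H xᵢ | : H ∈ ℝ^{d×d}, ∑_{j,l} |H_{jl}| ≤ ρ² } is at most ρ² · √(2 n log(2 d²)) · max_{1≤i≤n} ‖xᵢ‖_∞². -/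
open Finset

/-- Average of `exp` of a Rademacher sum factorizes and is bounded via `cosh x ≤ exp (x²/2)`. -/
lemma avg_exp_le {n : ℕ} (b : Fin n → ℝ) (u : ℝ) (hb : ∀ i, (b i) ^ 2 ≤ u) :
    ∑ σ : Fin n → Bool, Real.exp (∑ i, (if σ i then (1 : ℝ) else -1) * b i)
      ≤ 2 ^ n * Real.exp (n * u / 2) := by
  have hfact : ∑ σ : Fin n → Bool, Real.exp (∑ i, (if σ i then (1 : ℝ) else -1) * b i)
      = ∏ i, (2 * Real.cosh (b i)) := by
    simp_rw [Real.exp_sum]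
    rw [← Fintype.piFinset_univ,
      Finset.sum_prod_piFinset (Finset.univ : Finset Bool)
        (fun i j => Real.exp ((if j = true then (1 : ℝ) else -1) * b i))]
    refine Finset.prod_congr rfl fun i _ => ?_
    rw [Fintype.sum_bool, Real.cosh_eq]
    norm_num
    ring
  rw [hfact]
  calc ∏ i, (2 * Real.cosh (b i)) ≤ ∏ _i : Fin n, (2 * Real.exp (u / 2)) := by
        refine Finset.prod_le_prod (fun i _ => by positivity) (fun i _ => ?_)
        have h1 : Real.cosh (b i) ≤ Real.exp ((b i) ^ 2 / 2) := Real.cosh_le_exp_half_sq _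
        have h2 : Real.exp ((b i) ^ 2 / 2) ≤ Real.exp (u / 2) :=
          Real.exp_le_exp.2 (by linarith [hb i])
        linarith
    _ = 2 ^ n * Real.exp (n * u / 2) := by
        rw [Finset.prod_const, Finset.card_univ, Fintype.card_fin, mul_pow,
          ← Real.exp_nat_mul]
        ring_nf

/-- Massart-type maximal inequality for Rademacher averages over a finite family. -/
lemma massart {n : ℕ} (hn : 1 ≤ n) {ι : Type*} [Fintype ι]
    (hne : (Finset.univ : Finset ι).Nonempty)
    (a : Fin n → ι → ℝ) (c : ℝ) (hc : 0 ≤ c) (ha : ∀ i k, |a i k| ≤ c) :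
    (∑ σ : Fin n → Bool, Finset.univ.sup' hne
        (fun k => |∑ i, (if σ i then (1 : ℝ) else -1) * a i k|)) / 2 ^ n
      ≤ c * Real.sqrt (2 * n * Real.log (2 * (Fintype.card ι : ℝ))) := by
  set s : (Fin n → Bool) → Fin n → ℝ := fun σ i => if σ i then (1 : ℝ) else -1 with hs
  set S : (Fin n → Bool) → ι → ℝ := fun σ k => ∑ i, s σ i * a i k with hS
  set M : (Fin n → Bool) → ℝ := fun σ => Finset.univ.sup' hne (fun k => |S σ k|) with hM
  rcases eq_or_lt_of_le hc with hc0 | hc0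
  · -- c = 0 : everything is zero
    have ha0 : ∀ i k, a i k = 0 := fun i k =>
      abs_eq_zero.1 (le_antisymm (by rw [hc0]; exact ha i k) (abs_nonneg _))
    have hz : ∀ σ, M σ ≤ 0 := by
      intro σ
      refine Finset.sup'_le _ _ fun k _ => ?_
      have hSz : S σ k = 0 := Finset.sum_eq_zero fun i _ => by rw [ha0 i k]; ring
      rw [hSz, abs_zero]
    have hsum : (∑ σ : Fin n → Bool, M σ) ≤ 0 := Finset.sum_nonpos fun σ _ => hz σ
    calc (∑ σ : Fin n → Bool, M σ) / 2 ^ n ≤ 0 :=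
          div_nonpos_iff.2 (Or.inr ⟨hsum, by positivity⟩)
      _ ≤ _ := by positivity
  · -- c > 0
    have hNcard : 1 ≤ Fintype.card ι := Fintype.card_pos_iff.2 ⟨hne.choose⟩
    set N : ℝ := (Fintype.card ι : ℝ) with hNdef
    have hN1 : (1 : ℝ) ≤ N := by rw [hNdef]; exact_mod_cast hNcard
    set L : ℝ := Real.log (2 * N) with hLdef
    have hL : 0 < L := Real.log_pos (by linarith)
    have hn0 : (0 : ℝ) < n := by exact_mod_cast hn
    set t : ℝ := Real.sqrt (2 * L / (n * c ^ 2)) with htdef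
    have ht : 0 < t := Real.sqrt_pos.2 (by positivity)
    have ht2 : t ^ 2 = 2 * L / (n * c ^ 2) := Real.sq_sqrt (by positivity)
    set E : ℝ := (∑ σ : Fin n → Bool, M σ) / 2 ^ n with hE
    -- Jensen's inequality
    have hcard : ((Finset.univ : Finset (Fin n → Bool)).card : ℝ) = 2 ^ n := by
      simp
    have hwsum : ∑ _σ : Fin n → Bool, ((2 : ℝ) ^ n)⁻¹ = 1 := by
      rw [Finset.sum_const, nsmul_eq_mul, hcard]
      field_simp
    have hjensen : Real.exp (t * E) ≤ (∑ σ : Fin n → Bool, Real.exp (t * M σ)) / 2 ^ n := by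
      have h := convexOn_exp.map_sum_le (t := (Finset.univ : Finset (Fin n → Bool)))
        (w := fun _ => ((2 : ℝ) ^ n)⁻¹) (p := fun σ => t * M σ)
        (fun _ _ => by positivity) hwsum (fun _ _ => Set.mem_univ _)
      have h1 : ∑ σ : Fin n → Bool, ((2 : ℝ) ^ n)⁻¹ • (t * M σ) = t * E := by
        simp_rw [smul_eq_mul, ← mul_assoc, mul_comm (((2:ℝ)^n)⁻¹) t, mul_assoc,
          ← Finset.mul_sum]
        rw [hE, div_eq_mul_inv]
        ring
      have h2 : ∑ σ : Fin n → Bool, ((2 : ℝ) ^ n)⁻¹ • Real.exp (t * M σ)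
          = (∑ σ : Fin n → Bool, Real.exp (t * M σ)) / 2 ^ n := by
        simp_rw [smul_eq_mul, mul_comm (((2:ℝ)^n)⁻¹)]
        rw [← Finset.sum_mul, div_eq_mul_inv]
      rw [h1, h2] at h
      exact h
    -- bound exp(t M σ) by a sum of exponentials
    have hmax : ∀ σ, Real.exp (t * M σ)
        ≤ ∑ k : ι, (Real.exp (t * S σ k) + Real.exp (-(t * S σ k))) := by
      intro σ
      obtain ⟨k₀, hk₀mem, hk₀⟩ := Finset.exists_mem_eq_sup' hne (fun k => |S σ k|)
      have hone : Real.exp (t * M σ) ≤ Real.exp (t * S σ k₀) + Real.exp (-(t * S σ k₀)) := by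
        rw [hM]
        simp only
        rw [hk₀]
        rcases abs_cases (S σ k₀) with ⟨h1, _⟩ | ⟨h1, _⟩
        · rw [h1]
          exact le_add_of_nonneg_right (Real.exp_nonneg _)
        · rw [h1, mul_neg]
          exact le_add_of_nonneg_left (Real.exp_nonneg _)
      refine le_trans hone (Finset.single_le_sum (f := fun k =>
        Real.exp (t * S σ k) + Real.exp (-(t * S σ k))) (fun k _ => by positivity) hk₀mem)
    -- bound sums of exponentials via avg_exp_le
    have hkey : ∀ k : ι, (∑ σ : Fin n → Bool, (Real.exp (t * S σ k) + Real.exp (-(t * S σ k))))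
        ≤ 2 * (2 ^ n * Real.exp (n * (t * c) ^ 2 / 2)) := by
      intro k
      have hsq : ∀ i, (t * a i k) ^ 2 ≤ (t * c) ^ 2 := by
        intro i
        have h2 : (a i k) ^ 2 ≤ c ^ 2 := by
          rw [← sq_abs (a i k)]
          exact pow_le_pow_left₀ (abs_nonneg _) (ha i k) 2
        have : t ^ 2 * (a i k) ^ 2 ≤ t ^ 2 * c ^ 2 :=
          mul_le_mul_of_nonneg_left h2 (by positivity)
        calc (t * a i k) ^ 2 = t ^ 2 * (a i k) ^ 2 := by ring
          _ ≤ t ^ 2 * c ^ 2 := this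
          _ = (t * c) ^ 2 := by ring
      have hplus : ∑ σ : Fin n → Bool, Real.exp (t * S σ k)
          ≤ 2 ^ n * Real.exp (n * (t * c) ^ 2 / 2) := by
        refine le_trans (le_of_eq ?_) (avg_exp_le (fun i => t * a i k) ((t * c) ^ 2) hsq)
        refine Finset.sum_congr rfl fun σ _ => ?_
        congr 1
        rw [hS]
        simp only
        rw [Finset.mul_sum]
        exact Finset.sum_congr rfl fun i _ => by rw [hs]; ring
      have hminus : ∑ σ : Fin n → Bool, Real.exp (-(t * S σ k))
          ≤ 2 ^ n * Real.exp (n * (t * c) ^ 2 / 2) := by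
        have hsq' : ∀ i, (-(t * a i k)) ^ 2 ≤ (t * c) ^ 2 := by
          intro i
          calc (-(t * a i k)) ^ 2 = (t * a i k) ^ 2 := by ring
            _ ≤ (t * c) ^ 2 := hsq i
        refine le_trans (le_of_eq ?_)
          (avg_exp_le (fun i => -(t * a i k)) ((t * c) ^ 2) hsq')
        refine Finset.sum_congr rfl fun σ _ => ?_
        congr 1
        rw [hS]
        simp only
        rw [Finset.mul_sum, ← Finset.sum_neg_distrib]
        exact Finset.sum_congr rfl fun i _ => by rw [hs]; ring
      rw [Finset.sum_add_distrib]
      linarith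
    set w : ℝ := n * (t * c) ^ 2 / 2 with hw
    have hcombine : Real.exp (t * E) ≤ 2 * N * Real.exp w := by
      refine le_trans hjensen ?_
      have h1 : (∑ σ : Fin n → Bool, Real.exp (t * M σ))
          ≤ ∑ σ : Fin n → Bool, ∑ k : ι, (Real.exp (t * S σ k) + Real.exp (-(t * S σ k))) :=
        Finset.sum_le_sum fun σ _ => hmax σ
      have h2 : (∑ σ : Fin n → Bool, ∑ k : ι,
            (Real.exp (t * S σ k) + Real.exp (-(t * S σ k))))
          ≤ ∑ _k : ι, 2 * (2 ^ n * Real.exp w) := by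
        rw [Finset.sum_comm]
        exact Finset.sum_le_sum fun k _ => hkey k
      have h3 : (∑ _k : ι, 2 * ((2:ℝ) ^ n * Real.exp w)) = N * (2 * (2 ^ n * Real.exp w)) := by
        rw [Finset.sum_const, Finset.card_univ, nsmul_eq_mul, hNdef]
      calc (∑ σ : Fin n → Bool, Real.exp (t * M σ)) / 2 ^ n
          ≤ (N * (2 * (2 ^ n * Real.exp w))) / 2 ^ n := by
            gcongr
            exact le_trans h1 (le_trans h2 (le_of_eq h3))
        _ = 2 * N * Real.exp w := by
            field_simp
    have hlog : t * E ≤ L + w := by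
      have h := Real.log_le_log (Real.exp_pos _) hcombine
      rw [Real.log_exp, Real.log_mul (by positivity) (Real.exp_ne_zero _),
        Real.log_exp] at h
      rw [hLdef]
      exact h
    have hwL : w = L := by
      rw [hw, mul_pow, ht2]
      field_simp
    have hteq : t * (c * Real.sqrt (2 * n * L)) = 2 * L := by
      have hpos : 0 ≤ t * (c * Real.sqrt (2 * n * L)) := by positivity
      have hsq2 : (t * (c * Real.sqrt (2 * n * L))) ^ 2 = (2 * L) ^ 2 := by
        rw [mul_pow, mul_pow, ht2, Real.sq_sqrt (by positivity)]
        field_simp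
      calc t * (c * Real.sqrt (2 * n * L))
          = Real.sqrt ((t * (c * Real.sqrt (2 * n * L))) ^ 2) := (Real.sqrt_sq hpos).symm
        _ = Real.sqrt ((2 * L) ^ 2) := by rw [hsq2]
        _ = 2 * L := Real.sqrt_sq (by positivity)
    have hfin : t * E ≤ t * (c * Real.sqrt (2 * n * L)) := by
      rw [hteq]; linarith
    exact le_of_mul_le_mul_left hfin ht

/-- Rademacher complexity bound for quadratic forms of matrices with
entrywise ℓ1-norm at most ρ². -/
theorem rademacher_quadratic_forms {d n : ℕ} (hd : 1 ≤ d) (hn : 1 ≤ n)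
    (x : Fin n → EuclideanSpace ℝ (Fin d)) (ρ : ℝ) (hρ : 0 < ρ) :
    (∑ σ : Fin n → Bool,
        ⨆ H : {H : Matrix (Fin d) (Fin d) ℝ // ∑ j, ∑ l, |H j l| ≤ ρ ^ 2},
          |∑ i, (if σ i then (1 : ℝ) else -1) * ∑ j, ∑ l, H.1 j l * x i j * x i l|) / 2 ^ n
      ≤ ρ ^ 2 * Real.sqrt (2 * n * Real.log (2 * (d : ℝ) ^ 2)) *
        (Finset.univ.sup' ⟨⟨0, hn⟩, Finset.mem_univ _⟩
          (fun i => Finset.univ.sup' ⟨⟨0, hd⟩, Finset.mem_univ _⟩ (fun j => |x i j|))) ^ 2 := by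
  classical
  set j0 : Fin d := ⟨0, hd⟩ with hj0
  set i0 : Fin n := ⟨0, hn⟩ with hi0
  set B : ℝ := Finset.univ.sup' ⟨i0, Finset.mem_univ _⟩
      (fun i => Finset.univ.sup' ⟨j0, Finset.mem_univ _⟩ (fun j => |x i j|)) with hBdef
  have hB : ∀ i j, |x i j| ≤ B := by
    intro i j
    have h1 : |x i j| ≤ Finset.univ.sup' ⟨j0, Finset.mem_univ _⟩ (fun j' => |x i j'|) :=
      Finset.le_sup' (fun j' => |x i j'|) (Finset.mem_univ j)
    have h2 : Finset.univ.sup' ⟨j0, Finset.mem_univ _⟩ (fun j' => |x i j'|) ≤ B := by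
      rw [hBdef]
      exact Finset.le_sup'
        (fun i => Finset.univ.sup' ⟨j0, Finset.mem_univ _⟩ fun j => |x i j|)
        (Finset.mem_univ i)
    exact h1.trans h2
  have hB0 : 0 ≤ B := le_trans (abs_nonneg _) (hB i0 j0)
  set a : Fin n → Fin d × Fin d → ℝ := fun i k => x i k.1 * x i k.2 with hadef
  have hne' : (Finset.univ : Finset (Fin d × Fin d)).Nonempty := ⟨(j0, j0), Finset.mem_univ _⟩
  have ha : ∀ i k, |a i k| ≤ B ^ 2 := by
    intro i k
    rw [hadef]
    simp only
    rw [abs_mul, pow_two]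
    exact mul_le_mul (hB i k.1) (hB i k.2) (abs_nonneg _) hB0
  have hstep : ∀ σ : Fin n → Bool,
      (⨆ H : {H : Matrix (Fin d) (Fin d) ℝ // ∑ j, ∑ l, |H j l| ≤ ρ ^ 2},
          |∑ i, (if σ i then (1 : ℝ) else -1) * ∑ j, ∑ l, H.1 j l * x i j * x i l|)
      ≤ ρ ^ 2 * Finset.univ.sup' hne'
          (fun k => |∑ i, (if σ i then (1 : ℝ) else -1) * a i k|) := by
    intro σ
    have hsup0 : 0 ≤ Finset.univ.sup' hne'
        (fun k => |∑ i, (if σ i then (1 : ℝ) else -1) * a i k|) :=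
      le_trans (abs_nonneg _) (Finset.le_sup'
        (fun k => |∑ i, (if σ i then (1 : ℝ) else -1) * a i k|) (Finset.mem_univ (j0, j0)))
    refine Real.iSup_le (fun H => ?_) (mul_nonneg (by positivity) hsup0)
    have hswap : ∑ i, (if σ i then (1 : ℝ) else -1) * ∑ j, ∑ l, H.1 j l * x i j * x i l
        = ∑ j, ∑ l, H.1 j l * ∑ i, (if σ i then (1 : ℝ) else -1) * (x i j * x i l) := by
      simp_rw [Finset.mul_sum]
      rw [Finset.sum_comm]
      refine Finset.sum_congr rfl fun j _ => ?_
      rw [Finset.sum_comm]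
      exact Finset.sum_congr rfl fun l _ => Finset.sum_congr rfl fun i _ => by ring
    rw [hswap]
    calc |∑ j, ∑ l, H.1 j l * ∑ i, (if σ i then (1 : ℝ) else -1) * (x i j * x i l)|
        ≤ ∑ j, ∑ l, |H.1 j l * ∑ i, (if σ i then (1 : ℝ) else -1) * (x i j * x i l)| :=
          le_trans (Finset.abs_sum_le_sum_abs _ _)
            (Finset.sum_le_sum fun j _ => Finset.abs_sum_le_sum_abs _ _)
      _ ≤ ∑ j, ∑ l, |H.1 j l| * Finset.univ.sup' hne'
            (fun k => |∑ i, (if σ i then (1 : ℝ) else -1) * a i k|) := by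
          refine Finset.sum_le_sum fun j _ => Finset.sum_le_sum fun l _ => ?_
          rw [abs_mul]
          exact mul_le_mul_of_nonneg_left
            (Finset.le_sup' (fun k => |∑ i, (if σ i then (1 : ℝ) else -1) * a i k|)
              (Finset.mem_univ (j, l))) (abs_nonneg _)
      _ = (∑ j, ∑ l, |H.1 j l|) * Finset.univ.sup' hne'
            (fun k => |∑ i, (if σ i then (1 : ℝ) else -1) * a i k|) := by
          simp_rw [← Finset.sum_mul]
      _ ≤ _ := mul_le_mul_of_nonneg_right H.2 hsup0
  have hmassart := massart hn hne' a (B ^ 2) (by positivity) ha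
  calc (∑ σ : Fin n → Bool,
        ⨆ H : {H : Matrix (Fin d) (Fin d) ℝ // ∑ j, ∑ l, |H j l| ≤ ρ ^ 2},
          |∑ i, (if σ i then (1 : ℝ) else -1) * ∑ j, ∑ l, H.1 j l * x i j * x i l|) / 2 ^ n
      ≤ (∑ σ : Fin n → Bool, ρ ^ 2 * Finset.univ.sup' hne'
          (fun k => |∑ i, (if σ i then (1 : ℝ) else -1) * a i k|)) / 2 ^ n := by
        gcongr with σ hσ
        exact hstep σ
    _ = ρ ^ 2 * ((∑ σ : Fin n → Bool, Finset.univ.sup' hne'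
          (fun k => |∑ i, (if σ i then (1 : ℝ) else -1) * a i k|)) / 2 ^ n) := by
        rw [← Finset.mul_sum, mul_div_assoc]
    _ ≤ ρ ^ 2 * (B ^ 2 * Real.sqrt (2 * n *
          Real.log (2 * (Fintype.card (Fin d × Fin d) : ℝ)))) :=
        mul_le_mul_of_nonneg_left hmassart (by positivity)
    _ = ρ ^ 2 * Real.sqrt (2 * n * Real.log (2 * (d : ℝ) ^ 2)) * B ^ 2 := by
        have hcard : ((Fintype.card (Fin d × Fin d) : ℕ) : ℝ) = (d : ℝ) ^ 2 := by
          rw [Fintype.card_prod, Fintype.card_fin]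
          push_cast
          ring
        rw [hcard]
        ring
end
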